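/- arXiv:1503.04867 — 8 statements merged into one kernel-verified Lean document; each statement's English description precedes it below -/
import Mathlib

section
/- Assume the lens setting. Then: (i) every support D i is nonempty; (ii) the supports cover M, i.e. ⋃ i, D i = M; (iii) distinct supports have disjoint interiors, i.e. for i ≠ j, interior (D i) ∩ interior (D j) = ∅; and (iv) for every index i, C i equals the union of those supports D j for which C j ⊆ C i. -/
open Set

/-- Dichotomy for preconnected sets covered by two disjoint closed sets. -/
lemma preconn_closed_dichotomy {M : Type*} [TopologicalSpace M] {s u v : Set M}
    (hs : IsPreconnected s) (hu : IsClosed u) (hv : IsClosed v) (huv : u ∩ v = ∅)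
    (hsuv : s ⊆ u ∪ v) : s ⊆ u ∨ s ⊆ v := by
  have h := hs vᶜ uᶜ hv.isOpen_compl hu.isOpen_compl
  have hcov : s ⊆ vᶜ ∪ uᶜ := by
    intro x hx
    by_contra hx'
    simp only [mem_union, mem_compl_iff, not_or, not_not] at hx'
    exact absurd (mem_inter hx'.2 hx'.1) (by simp [huv])
  by_contra hcon
  push_neg at hcon
  obtain ⟨a, ha, hau⟩ := Set.not_subset.mp hcon.1
  obtain ⟨b, hb, hbv⟩ := Set.not_subset.mp hcon.2
  obtain ⟨x, hxs, hxv, hxu⟩ := h hcov ⟨b, hb, hbv⟩ ⟨a, ha, hau⟩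
  rcases hsuv hxs with h' | h'
  · exact hxu h'
  · exact hxv h'

/-- The key nonemptiness lemma: a connected set cannot be covered by the later
sets of a nested family, so `C i \ ⋃ j > i, C j` is nonempty. -/
lemma lens_diff_nonempty {M : Type*} [TopologicalSpace M] {ι : Type*} [Finite ι]
    [LinearOrder ι] (C : ι → Set M)
    (hclosed : ∀ i, IsClosed (C i)) (hconn : ∀ i, IsConnected (C i))
    (hnest : ∀ i j, i < j → C j ⊂ C i ∨ C i ∩ C j = ∅) (i : ι) :
    (C i \ ⋃ j > i, C j).Nonempty := by
  by_contra h
  rw [Set.not_nonempty_iff_eq_empty, Set.diff_eq_empty] at h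
  set F : Set ι := {j | i < j ∧ C j ⊂ C i} with hF
  have hcov : C i ⊆ ⋃ j ∈ F, C j := by
    intro x hx
    obtain ⟨j, hj, hxj⟩ : ∃ j, i < j ∧ x ∈ C j := by simpa using h hx
    rcases hnest i j hj with hsub | hdisj
    · exact Set.mem_biUnion ⟨hj, hsub⟩ hxj
    · exact absurd (Set.mem_inter hx hxj) (by simp [hdisj])
  have hFne : F.Nonempty := by
    obtain ⟨x, hx⟩ := (hconn i).nonempty
    obtain ⟨j, hj, _⟩ := Set.mem_iUnion₂.mp (hcov hx)
    exact ⟨j, hj⟩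
  obtain ⟨j₀, hj₀F, hmax⟩ : ∃ a ∈ F, ∀ a' ∈ F, C a ≤ C a' → C a = C a' := by
    obtain ⟨a, ha, hm⟩ := Set.Finite.exists_maximalFor C F (Set.toFinite F) hFne
    exact ⟨a, ha, fun a' h' hle => le_antisymm hle (hm h' hle)⟩
  have hdicho : ∀ j ∈ F, C j ⊆ C j₀ ∨ C j ∩ C j₀ = ∅ := by
    intro j hj
    rcases lt_trichotomy j j₀ with hlt | heq | hgt
    · rcases hnest j j₀ hlt with hsub | hdisj
      · exact absurd (hmax j hj hsub.subset) (ne_of_ssubset hsub)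
      · exact Or.inr hdisj
    · exact Or.inl (heq ▸ Set.Subset.rfl)
    · rcases hnest j₀ j hgt with hsub | hdisj
      · exact Or.inl hsub.subset
      · exact Or.inr (by rw [Set.inter_comm]; exact hdisj)
  set V : Set M := ⋃ j ∈ {j ∈ F | C j ∩ C j₀ = ∅}, C j with hV
  have hVclosed : IsClosed V := by
    apply Set.Finite.isClosed_biUnion (Set.toFinite _)
    intro j _; exact hclosed j
  have hdisjV : C j₀ ∩ V = ∅ := by
    ext x
    simp only [hV, Set.mem_inter_iff, Set.mem_iUnion, Set.mem_setOf_eq,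
      Set.mem_empty_iff_false, iff_false, not_and]
    rintro hx0 ⟨j, ⟨_, hdj⟩, hxj⟩
    exact absurd (Set.mem_inter hxj hx0) (by simp [hdj])
  have hcov2 : C i ⊆ C j₀ ∪ V := by
    intro x hx
    obtain ⟨j, hj, hxj⟩ := Set.mem_iUnion₂.mp (hcov hx)
    rcases hdicho j hj with hsub | hdisj
    · exact Or.inl (hsub hxj)
    · exact Or.inr (Set.mem_biUnion ⟨hj, hdisj⟩ hxj)
  rcases preconn_closed_dichotomy (hconn i).isPreconnected (hclosed j₀) hVclosed
      hdisjV hcov2 with h1 | h1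
  · exact (hj₀F.2.not_subset) h1
  · obtain ⟨y, hy⟩ := (hconn j₀).nonempty
    have : y ∈ C j₀ ∩ V := ⟨hy, h1 (hj₀F.2.subset hy)⟩
    simp [hdisjV] at this

/-- Elementary properties of varilet supports.  Given a lens on a compact metric
space `M` (a finite nested family `C` of closed connected sets with nonempty
interior covering `M`), the supports `D i = closure (C i \ ⋃ j > i, C j)` are
nonempty, cover `M`, have pairwise disjoint interiors, and each `C i` is the
union of the supports `D j` with `C j ⊆ C i`. -/
theorem varilet_support_properties {M : Type*} [MetricSpace M] [CompactSpace M]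
    {ι : Type*} [Fintype ι] [LinearOrder ι]
    (C : ι → Set M)
    (hclosed : ∀ i, IsClosed (C i))
    (hconn : ∀ i, IsConnected (C i))
    (hint : ∀ i, (interior (C i)).Nonempty)
    (hnest : ∀ i j, i < j → C j ⊂ C i ∨ C i ∩ C j = ∅)
    (hcover : ⋃ i, C i = Set.univ)
    (D : ι → Set M)
    (hD : ∀ i, D i = closure (C i \ ⋃ j > i, C j)) :
    (∀ i, (D i).Nonempty) ∧
    (⋃ i, D i = Set.univ) ∧
    (∀ i j, i ≠ j → interior (D i) ∩ interior (D j) = ∅) ∧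
    (∀ i, C i = ⋃ j ∈ {j | C j ⊆ C i}, D j) := by
  -- D i ⊆ C i
  have hDsub : ∀ i, D i ⊆ C i := by
    intro i
    rw [hD i]
    exact closure_minimal Set.diff_subset (hclosed i)
  -- for every x there is a maximal index k with x ∈ C k, and then x ∈ D k
  have hmaxidx : ∀ x : M, ∃ k, x ∈ C k ∧ x ∈ D k := by
    intro x
    have hxu : x ∈ ⋃ i, C i := hcover ▸ Set.mem_univ x
    obtain ⟨i, hi⟩ := Set.mem_iUnion.mp hxu
    set A : Set ι := {j | x ∈ C j} with hA
    obtain ⟨k, hkA, hkmax⟩ : ∃ a ∈ A, ∀ a' ∈ A, id a ≤ id a' → id a = id a' := by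
      obtain ⟨a, ha, hm⟩ := Set.Finite.exists_maximalFor id A (Set.toFinite A) ⟨i, hi⟩
      exact ⟨a, ha, fun a' h' hle => le_antisymm hle (hm h' hle)⟩
    refine ⟨k, hkA, ?_⟩
    rw [hD k]
    apply subset_closure
    refine ⟨hkA, ?_⟩
    simp only [Set.mem_iUnion, not_exists]
    rintro j hj hxj
    exact absurd (hkmax j hxj hj.le) (ne_of_lt hj)
  -- disjoint interiors for i < j
  have hdisjint : ∀ i j, i < j → interior (D i) ∩ interior (D j) = ∅ := by
    intro i j hij
    have h1 : D i ⊆ (interior (C j))ᶜ := by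
      rw [hD i, ← closure_compl]
      apply closure_mono
      intro x hx hxj
      exact hx.2 (Set.mem_biUnion hij hxj)
    have h2 : interior (D j) ⊆ interior (C j) := interior_mono (hDsub j)
    ext x
    simp only [Set.mem_inter_iff, Set.mem_empty_iff_false, iff_false, not_and]
    intro hxi hxj
    exact (h1 (interior_subset hxi)) (h2 hxj)
  refine ⟨?_, ?_, ?_, ?_⟩
  · intro i
    rw [hD i]
    exact (lens_diff_nonempty C hclosed hconn hnest i).closure
  · apply Set.eq_univ_of_forall
    intro x
    obtain ⟨k, _, hk⟩ := hmaxidx x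
    exact Set.mem_iUnion.mpr ⟨k, hk⟩
  · intro i j hij
    rcases lt_or_gt_of_ne hij with h | h
    · exact hdisjint i j h
    · rw [Set.inter_comm]; exact hdisjint j i h
  · intro i
    apply Set.Subset.antisymm
    · intro x hx
      have hxu : x ∈ ⋃ i, C i := hcover ▸ Set.mem_univ x
      set A : Set ι := {j | x ∈ C j} with hA
      obtain ⟨k, hkA, hkmax⟩ : ∃ a ∈ A, ∀ a' ∈ A, id a ≤ id a' → id a = id a' := by
        obtain ⟨a, ha, hm⟩ := Set.Finite.exists_maximalFor id A (Set.toFinite A) ⟨i, hx⟩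
        exact ⟨a, ha, fun a' h' hle => le_antisymm hle (hm h' hle)⟩
      have hxDk : x ∈ D k := by
        rw [hD k]
        apply subset_closure
        refine ⟨hkA, ?_⟩
        simp only [Set.mem_iUnion, not_exists]
        rintro j hj hxj
        exact absurd (hkmax j hxj hj.le) (ne_of_lt hj)
      have hCki : C k ⊆ C i := by
        rcases lt_trichotomy i k with hlt | heq | hgt
        · rcases hnest i k hlt with hsub | hdisj
          · exact hsub.subset
          · exact absurd (Set.mem_inter hx hkA) (by simp [hdisj])
        · exact heq ▸ Set.Subset.rfl
        · exact absurd (hkmax i hx hgt.le) (ne_of_lt hgt)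
      exact Set.mem_biUnion hCki hxDk
    · intro x hx
      obtain ⟨j, hj, hxj⟩ := Set.mem_iUnion₂.mp hx
      exact hj (hDsub j hxj)
end

section
/- Assume the lens setting, and let π : M → ℝ be constant-boundary for the lens. Then for every index i there exists a continuous function π* : M → ℝ such that π* agrees with π on the support D i, π* is constant on every connected component of M \ D i (π* is a flat extension of π over D i), and π* is itself constant-boundary for the lens, i.e. constant on the frontier of C k for every index k. -/
open Set Topology

/-- A finite preconnected set of reals is a subsingleton. -/
theorem FEL.real_finite_preconnected_subsingleton {S : Set ℝ}
    (h : IsPreconnected S) (hf : S.Finite) : S.Subsingleton := by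
  intro a ha b hb
  by_contra hne
  rcases lt_or_gt_of_ne hne with hlt | hlt
  · exact (Set.Icc_infinite hlt) (hf.subset (h.ordConnected.out ha hb))
  · exact (Set.Icc_infinite hlt) (hf.subset (h.ordConnected.out hb ha))

/-- Flat Extension Lemma, existence + constant-boundary.  Given a lens `C` on a
compact metric space `M` with supports `D i = closure (C i \ ⋃ j > i, C j)`, and
a continuous `π : M → ℝ` constant on every `frontier (C k)`, then for every
index `i` there is a continuous `πs : M → ℝ` agreeing with `π` on `D i`,
constant on every connected component of `M \ D i`, and constant on every
`frontier (C k)`. -/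
theorem flat_extension_exists {M : Type*} [MetricSpace M] [CompactSpace M]
    {ι : Type*} [Fintype ι] [LinearOrder ι]
    (C : ι → Set M)
    (hclosed : ∀ i, IsClosed (C i))
    (hconn : ∀ i, IsConnected (C i))
    (hint : ∀ i, (interior (C i)).Nonempty)
    (hnest : ∀ i j, i < j → C j ⊂ C i ∨ C i ∩ C j = ∅)
    (hcover : ⋃ i, C i = Set.univ)
    (D : ι → Set M)
    (hD : ∀ i, D i = closure (C i \ ⋃ j > i, C j))
    (π : M → ℝ) (hπc : Continuous π)
    (hπcb : ∀ k, ∀ x ∈ frontier (C k), ∀ y ∈ frontier (C k), π x = π y) :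
    ∀ i, ∃ πs : M → ℝ, Continuous πs ∧
      (∀ x ∈ D i, πs x = π x) ∧
      (∀ x ∈ (D i)ᶜ, ∀ y ∈ connectedComponentIn (D i)ᶜ x, πs y = πs x) ∧
      (∀ k, ∀ x ∈ frontier (C k), ∀ y ∈ frontier (C k), πs x = πs y) := by
  classical
  intro i
  -- the constant boundary values
  set c : ι → ℝ := fun j => if h : (frontier (C j)).Nonempty then π h.some else 0 with hc_def
  have hc : ∀ j, ∀ x ∈ frontier (C j), c j = π x := by
    intro j x hx
    have hne : (frontier (C j)).Nonempty := ⟨x, hx⟩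
    simp only [hc_def, dif_pos hne]
    exact hπcb j hne.some hne.some_mem x hx
  -- the indices j > i whose lens piece meets (hence sits strictly inside) C i
  set Jp : ι → Prop := fun j => i < j ∧ (C i ∩ C j).Nonempty with hJp_def
  set Mx : ι → Prop := fun j => Jp j ∧ ∀ j', Jp j' → ¬ C j ⊂ C j' with hMx_def
  have hJsub : ∀ j, Jp j → C j ⊂ C i := by
    intro j hj
    rcases hnest i j hj.1 with h | h
    · exact h
    · exact absurd hj.2 (by rw [h]; exact Set.not_nonempty_empty)
  have hmax : ∀ j, Jp j → ∃ j', Mx j' ∧ C j ⊆ C j' := by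
    intro j hj
    obtain ⟨a, ha, hamax⟩ := Set.Finite.exists_maximalFor C {j' | Jp j' ∧ C j ⊆ C j'}
      (Set.toFinite _) ⟨j, hj, subset_rfl⟩
    refine ⟨a, ⟨ha.1, fun j' hj' hss => hss.2 (hamax ⟨hj', ha.2.trans hss.subset⟩ hss.subset)⟩,
      ha.2⟩
  -- basic facts about `D i`
  have hDsub : D i ⊆ C i := by
    rw [hD i]
    exact closure_minimal (fun x hx => hx.1) (hclosed i)
  have hDint : ∀ j, i < j → ∀ x ∈ D i, x ∉ interior (C j) := by
    intro j hij x hxD hxint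
    rw [hD i] at hxD
    obtain ⟨y, hy1, hy2⟩ := mem_closure_iff.mp hxD (interior (C j)) isOpen_interior hxint
    exact hy2.2 (Set.mem_iUnion₂.mpr ⟨j, hij, interior_subset hy1⟩)
  have hfr : ∀ (k : ι) (x : M), x ∈ C k → x ∉ interior (C k) → x ∈ frontier (C k) := by
    intro k x h1 h2
    rw [(hclosed k).frontier_eq]
    exact ⟨h1, h2⟩
  -- the flat extension
  set πs : M → ℝ := fun x =>
    if h : ∃ j, Mx j ∧ x ∈ C j then c h.choose else if x ∈ D i then π x else c i with hπs_def
  -- well-definedness lemmas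
  have hW2 : ∀ j, Mx j → ∀ x ∈ C j, πs x = c j := by
    intro j hj x hx
    have hex : ∃ j', Mx j' ∧ x ∈ C j' := ⟨j, hj, hx⟩
    simp only [hπs_def, dif_pos hex]
    obtain ⟨hm, hxc⟩ := hex.choose_spec
    rcases eq_or_ne hex.choose j with h | h
    · rw [h]
    · exfalso
      rcases h.lt_or_gt with hlt | hlt
      · rcases hnest _ _ hlt with hss | hemp
        · exact hj.2 _ hm.1 hss
        · exact absurd hemp (Set.nonempty_iff_ne_empty.mp ⟨x, hxc, hx⟩)
      · rcases hnest _ _ hlt with hss | hemp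
        · exact hm.2 _ hj.1 hss
        · exact absurd hemp (Set.nonempty_iff_ne_empty.mp ⟨x, hx, hxc⟩)
  have hW1 : ∀ x ∈ D i, πs x = π x := by
    intro x hx
    by_cases hex : ∃ j', Mx j' ∧ x ∈ C j'
    · simp only [hπs_def, dif_pos hex]
      obtain ⟨hm, hxc⟩ := hex.choose_spec
      exact hc _ x (hfr _ x hxc (hDint _ hm.1.1 x hx))
    · simp only [hπs_def, dif_neg hex, if_pos hx]
  have hW3 : ∀ x ∈ closure ((C i)ᶜ), πs x = c i := by
    intro x hx
    by_cases hex : ∃ j', Mx j' ∧ x ∈ C j'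
    · simp only [hπs_def, dif_pos hex]
      obtain ⟨hm, hxc⟩ := hex.choose_spec
      have hxCi : x ∈ C i := (hJsub _ hm.1).subset hxc
      have hxfrCi : x ∈ frontier (C i) := by
        rw [frontier_eq_closure_inter_closure]
        exact ⟨subset_closure hxCi, hx⟩
      have hnotint : x ∉ interior (C i) := by
        rw [(hclosed i).frontier_eq] at hxfrCi
        exact hxfrCi.2
      have hxfrj : x ∈ frontier (C hex.choose) :=
        hfr _ x hxc fun hint => hnotint (interior_mono (hJsub _ hm.1).subset hint)
      rw [hc _ x hxfrj, hc i x hxfrCi]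
    · by_cases hxD : x ∈ D i
      · simp only [hπs_def, dif_neg hex, if_pos hxD]
        have hxfrCi : x ∈ frontier (C i) := by
          rw [frontier_eq_closure_inter_closure]
          exact ⟨subset_closure (hDsub hxD), hx⟩
        exact (hc i x hxfrCi).symm
      · simp only [hπs_def, dif_neg hex, if_neg hxD]
  -- the closed cover
  have hcov : ∀ x : M, (∃ j, Mx j ∧ x ∈ C j) ∨ x ∈ D i ∨ x ∈ closure ((C i)ᶜ) := by
    intro x
    by_cases hxCi : x ∈ C i
    · by_cases hxU : x ∈ ⋃ j, ⋃ (_ : j > i), C j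
      · obtain ⟨j, hij, hxj⟩ := Set.mem_iUnion₂.mp hxU
        obtain ⟨j', hj', hsub⟩ := hmax j ⟨hij, ⟨x, hxCi, hxj⟩⟩
        exact Or.inl ⟨j', hj', hsub hxj⟩
      · refine Or.inr (Or.inl ?_)
        rw [hD i]
        exact subset_closure ⟨hxCi, hxU⟩
    · exact Or.inr (Or.inr (subset_closure hxCi))
  -- continuity by gluing over a finite closed cover
  have hπscont : Continuous πs := by
    set pc : Option (Option ι) → Set M := fun s =>
      match s with
      | none => D i
      | some none => closure ((C i)ᶜ)
      | some (some j) => if Mx j then C j else ∅ with hpc_def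
    refine (locallyFinite_of_finite pc).continuous ?_ ?_ ?_
    · apply Set.eq_univ_of_forall
      intro x
      rcases hcov x with ⟨j, hj, hx⟩ | hx | hx
      · refine Set.mem_iUnion.mpr ⟨some (some j), ?_⟩
        show x ∈ (if Mx j then C j else ∅)
        rw [if_pos hj]
        exact hx
      · exact Set.mem_iUnion.mpr ⟨none, hx⟩
      · exact Set.mem_iUnion.mpr ⟨some none, hx⟩
    · rintro (_ | _ | j)
      · show IsClosed (D i)
        rw [hD i]; exact isClosed_closure
      · exact isClosed_closure
      · show IsClosed (if Mx j then C j else ∅)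
        split_ifs
        · exact hclosed j
        · exact isClosed_empty
    · rintro (_ | _ | j)
      · exact (hπc.continuousOn).congr hW1
      · exact continuousOn_const.congr hW3
      · show ContinuousOn πs (if Mx j then C j else ∅)
        split_ifs with hj
        · exact continuousOn_const.congr (hW2 j hj)
        · exact continuousOn_empty _
  refine ⟨πs, hπscont, hW1, ?_, ?_⟩
  · -- constant on connected components of the complement of D i
    intro x hx y hy
    have himg : IsPreconnected (πs '' connectedComponentIn ((D i)ᶜ) x) :=
      isPreconnected_connectedComponentIn.image _ hπscont.continuousOn
    have hsub : πs '' connectedComponentIn ((D i)ᶜ) x ⊆ insert (c i) (Set.range c) := by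
      rintro _ ⟨z, hz, rfl⟩
      have hzD : z ∉ D i := connectedComponentIn_subset _ _ hz
      by_cases hex : ∃ j', Mx j' ∧ z ∈ C j'
      · simp only [hπs_def, dif_pos hex]
        exact Set.mem_insert_of_mem _ ⟨hex.choose, rfl⟩
      · simp only [hπs_def, dif_neg hex, if_neg hzD]
        exact Set.mem_insert _ _
    have hfin : (πs '' connectedComponentIn ((D i)ᶜ) x).Finite :=
      ((Set.finite_range c).insert _).subset hsub
    exact FEL.real_finite_preconnected_subsingleton himg hfin
      (Set.mem_image_of_mem _ hy)
      (Set.mem_image_of_mem _ (mem_connectedComponentIn hx))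
  · -- constant on every frontier (C k)
    intro k x hx y hy
    by_cases hA : ∃ j, Mx j ∧ C k ⊆ C j
    · obtain ⟨j, hj, hsub⟩ := hA
      rw [hW2 j hj x (hsub ((hclosed k).frontier_subset hx)),
        hW2 j hj y (hsub ((hclosed k).frontier_subset hy))]
    · by_cases hB : ∃ x0, x0 ∈ frontier (C k) ∧ x0 ∈ C i
      · have key : ∀ z ∈ frontier (C k), πs z = π z := by
          intro z hz
          have hzCk : z ∈ C k := (hclosed k).frontier_subset hz
          have hznotint : z ∉ interior (C k) := by
            rw [(hclosed k).frontier_eq] at hz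
            exact hz.2
          by_cases hex : ∃ j', Mx j' ∧ z ∈ C j'
          · simp only [hπs_def, dif_pos hex]
            obtain ⟨hm, hzc⟩ := hex.choose_spec
            have hzfr : z ∈ frontier (C hex.choose) := by
              rcases eq_or_ne k hex.choose with he | hne
              · rwa [← he]
              · refine hfr _ z hzc fun hint => ?_
                have hss : C hex.choose ⊂ C k := by
                  rcases hne.lt_or_gt with hlt | hlt
                  · rcases hnest _ _ hlt with hss | hemp
                    · exact hss
                    · exact absurd hemp (Set.nonempty_iff_ne_empty.mp ⟨z, hzCk, hzc⟩)
                  · rcases hnest _ _ hlt with hss | hemp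
                    · exact absurd ⟨hex.choose, hm, hss.subset⟩ hA
                    · exact absurd hemp (Set.nonempty_iff_ne_empty.mp ⟨z, hzc, hzCk⟩)
                exact hznotint (interior_mono hss.subset hint)
            exact hc _ z hzfr
          · by_cases hzD : z ∈ D i
            · simp only [hπs_def, dif_neg hex, if_pos hzD]
            · simp only [hπs_def, dif_neg hex, if_neg hzD]
              obtain ⟨x0, hx0F, hx0Ci⟩ := hB
              rcases eq_or_ne k i with he | hne
              · rw [← he]
                exact hc k z hz
              · rcases hne.lt_or_gt with hlt | hlt
                · rcases hnest k i hlt with hss | hemp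
                  · -- C i ⊂ C k
                    have hx0fri : x0 ∈ frontier (C i) := by
                      refine hfr i x0 hx0Ci fun hint => ?_
                      rw [(hclosed k).frontier_eq] at hx0F
                      exact hx0F.2 (interior_mono hss.subset hint)
                    rw [hc i x0 hx0fri]
                    exact hπcb k x0 hx0F z hz
                  · exact absurd hemp (Set.nonempty_iff_ne_empty.mp
                      ⟨x0, (hclosed k).frontier_subset hx0F, hx0Ci⟩)
                · rcases hnest i k hlt with hss | hemp
                  · -- C k ⊂ C i, impossible here
                    exfalso
                    have hzCi : z ∈ C i := hss.subset hzCk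
                    have hzU : z ∈ ⋃ j, ⋃ (_ : j > i), C j := by
                      by_contra hzU
                      exact hzD (by rw [hD i]; exact subset_closure ⟨hzCi, hzU⟩)
                    obtain ⟨j, hij, hzj⟩ := Set.mem_iUnion₂.mp hzU
                    obtain ⟨j', hj', hsub⟩ := hmax j ⟨hij, ⟨z, hzCi, hzj⟩⟩
                    exact hex ⟨j', hj', hsub hzj⟩
                  · exact absurd hemp (Set.nonempty_iff_ne_empty.mp
                      ⟨x0, hx0Ci, (hclosed k).frontier_subset hx0F⟩)
        rw [key x hx, key y hy]
        exact hπcb k x hx y hy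
      · push_neg at hB
        have hall : ∀ z ∈ frontier (C k), πs z = c i := fun z hz =>
          hW3 z (subset_closure fun hzCi => hB z hz hzCi)
        rw [hall x hx, hall y hy]
end

section
/- Assume the lens setting with M connected. Then for every index i and every successor C j of C i, there exist points p ∈ frontier (D i) and q ∈ frontier (D j) such that for every function π : M → ℝ that is constant-boundary for the lens, π(p) = π(q) = c_j(π), the common value of π on the frontier of C j. -/
open Set

/-- A preconnected set cannot be covered by two closed sets that are disjoint on it
while meeting both. -/
lemma lens_precon_aux {M : Type*} [TopologicalSpace M] {s F1 F2 : Set M}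
    (hs : IsPreconnected s) (h1 : IsClosed F1) (h2 : IsClosed F2)
    (hcov : s ⊆ F1 ∪ F2) (hdis : s ∩ (F1 ∩ F2) = ∅)
    (hn1 : (s ∩ F1).Nonempty) (hn2 : (s ∩ F2).Nonempty) : False := by
  have hmem : ∀ x ∈ s, ¬ (x ∈ F1 ∧ x ∈ F2) := by
    intro x hx hx12
    have : x ∈ s ∩ (F1 ∩ F2) := ⟨hx, hx12.1, hx12.2⟩
    rw [hdis] at this
    exact this
  obtain ⟨y, hys, hyU, hyV⟩ := hs F2ᶜ F1ᶜ h2.isOpen_compl h1.isOpen_compl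
    (by
      intro x hx
      by_cases h1x : x ∈ F1
      · exact Or.inl fun h2x => hmem x hx ⟨h1x, h2x⟩
      · exact Or.inr h1x)
    (by
      obtain ⟨x, hxs, hx1⟩ := hn1
      exact ⟨x, hxs, fun hx2 => hmem x hxs ⟨hx1, hx2⟩⟩)
    (by
      obtain ⟨x, hxs, hx2⟩ := hn2
      exact ⟨x, hxs, fun hx1 => hmem x hxs ⟨hx1, hx2⟩⟩)
  rcases hcov hys with h | h
  · exact hyV h
  · exact hyU h

/-- Key lemma: for a successor pair `(a, b)`, the frontier of
`D a = closure (C a \ ⋃ k > a, C k)` meets the frontier of `C b`. -/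
lemma lens_link_aux {M : Type*} [TopologicalSpace M]
    {ι : Type*} [Fintype ι] [LinearOrder ι]
    (C : ι → Set M)
    (hclosed : ∀ i, IsClosed (C i))
    (hconn : ∀ i, IsConnected (C i))
    (hint : ∀ i, (interior (C i)).Nonempty)
    (hnest : ∀ i j, i < j → C j ⊂ C i ∨ C i ∩ C j = ∅)
    {a b : ι} (hab : a < b) (hsub : C b ⊂ C a)
    (hsucc : ¬ ∃ k, C b ⊂ C k ∧ C k ⊂ C a) :
    ∃ p ∈ frontier (closure (C a \ ⋃ k > a, C k)), p ∈ frontier (C b) := by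
  set Da := closure (C a \ ⋃ k > a, C k) with hDa
  have hDa_closed : IsClosed Da := isClosed_closure
  have hDa_sub : Da ⊆ C a := closure_minimal diff_subset (hclosed a)
  -- D a avoids the interior of C b
  have hDa_compl : Da ⊆ (interior (C b))ᶜ := by
    have h1 : C a \ ⋃ k > a, C k ⊆ (C b)ᶜ := by
      intro x hx hxb
      exact hx.2 (mem_iUnion₂.mpr ⟨b, hab, hxb⟩)
    calc Da ⊆ closure (C b)ᶜ := closure_mono h1
    _ = (interior (C b))ᶜ := closure_compl
  -- the union of "other" later pieces
  set F2 : Set M := Da ∪ ⋃ k ∈ {k : ι | a < k ∧ C k ∩ C b = ∅}, C k with hF2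
  have hF2_closed : IsClosed F2 :=
    hDa_closed.union (Set.Finite.isClosed_biUnion (Set.toFinite _) fun k _ => hclosed k)
  -- the covering fact
  have hcov : C a ⊆ C b ∪ F2 := by
    intro x hx
    by_cases hx2 : x ∈ ⋃ k > a, C k
    · obtain ⟨k, hk, hxk⟩ := mem_iUnion₂.mp hx2
      by_cases hkb : C k ∩ C b = ∅
      · exact Or.inr (Or.inr (mem_biUnion (⟨hk, hkb⟩ : k ∈ {k : ι | a < k ∧ C k ∩ C b = ∅}) hxk))
      · rcases lt_trichotomy k b with h | h | h
        · rcases hnest k b h with hcb | he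
          · exfalso
            apply hsucc
            refine ⟨k, hcb, ?_⟩
            rcases hnest a k hk with h' | h'
            · exact h'
            · exfalso
              have : x ∈ C a ∩ C k := ⟨hx, hxk⟩
              rw [h'] at this
              exact this
          · exact absurd he hkb
        · subst h
          exact Or.inl hxk
        · rcases hnest b k h with h' | h'
          · exact Or.inl (h'.1 hxk)
          · exfalso
            apply hkb
            rw [Set.inter_comm]
            exact h'
    · exact Or.inr (Or.inl (subset_closure ⟨hx, hx2⟩))
  have hCb_ne : (C b).Nonempty := (hint b).mono interior_subset
  -- Step 1: D a meets C b
  have hne : (Da ∩ C b).Nonempty := by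
    by_contra hem
    rw [Set.not_nonempty_iff_eq_empty] at hem
    have hdis : C a ∩ (C b ∩ F2) = ∅ := by
      ext x
      simp only [mem_inter_iff, mem_empty_iff_false, iff_false, not_and]
      intro _ hxb hxF2
      rcases hxF2 with h | h
      · have : x ∈ Da ∩ C b := ⟨h, hxb⟩
        rw [hem] at this
        exact this
      · obtain ⟨k, hkS, hxk⟩ := mem_iUnion₂.mp h
        have : x ∈ C k ∩ C b := ⟨hxk, hxb⟩
        rw [hkS.2] at this
        exact this
    have hn1 : (C a ∩ C b).Nonempty := by
      obtain ⟨x, hx⟩ := hCb_ne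
      exact ⟨x, hsub.1 hx, hx⟩
    have hn2 : (C a ∩ F2).Nonempty := by
      by_contra h
      rw [Set.not_nonempty_iff_eq_empty] at h
      have hsub' : C a ⊆ C b := by
        intro x hx
        rcases hcov hx with h' | h'
        · exact h'
        · exfalso
          have : x ∈ C a ∩ F2 := ⟨hx, h'⟩
          rw [h] at this
          exact this
      exact hsub.2 hsub'
    exact lens_precon_aux (hconn a).isPreconnected (hclosed b) hF2_closed hcov hdis hn1 hn2
  -- Step 2: frontier (D a) meets C b
  have hfront : ∃ x, x ∈ frontier Da ∧ x ∈ C b := by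
    by_contra hfe
    push_neg at hfe
    have hsubint : ∀ x, x ∈ Da → x ∈ C b → x ∈ interior Da := by
      intro x hxD hxb
      by_contra hxi
      have hxf : x ∈ frontier Da := by
        rw [hDa_closed.frontier_eq]
        exact ⟨hxD, hxi⟩
      exact hfe x hxf hxb
    obtain ⟨y, hyb, hyU, hyV⟩ :=
      (hconn b).isPreconnected (interior Da) Daᶜ isOpen_interior hDa_closed.isOpen_compl
      (by
        intro x hx
        by_cases hxD : x ∈ Da
        · exact Or.inl (hsubint x hxD hx)
        · exact Or.inr hxD)
      (by
        obtain ⟨x, hxD, hxb⟩ := hne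
        exact ⟨x, hxb, hsubint x hxD hxb⟩)
      (by
        by_contra h
        rw [Set.not_nonempty_iff_eq_empty] at h
        have hbD : C b ⊆ Da := by
          intro x hx
          by_contra hxD
          have : x ∈ C b ∩ Daᶜ := ⟨hx, hxD⟩
          rw [h] at this
          exact this
        obtain ⟨y, hy⟩ := hint b
        exact hDa_compl (hbD (interior_subset hy)) hy)
    exact hyV (interior_subset hyU)
  obtain ⟨x, hxF, hxb⟩ := hfront
  refine ⟨x, hxF, ?_⟩
  rw [(hclosed b).frontier_eq]
  refine ⟨hxb, ?_⟩
  have hxD : x ∈ Da := by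
    rw [hDa_closed.frontier_eq] at hxF
    exact hxF.1
  exact hDa_compl hxD

/-- Link Lemma.  In the lens setting with `M` connected, for every index `i` and
every successor `C j` of `C i` (i.e. `i < j`, `C j ⊊ C i`, and no `C k` lies
strictly between), there are points `p ∈ frontier (D i)` and `q ∈ frontier (D j)`
such that every continuous `π : M → ℝ` constant on each `frontier (C k)`
satisfies `π p = π q = c_j(π)`, the common value of `π` on `frontier (C j)`. -/
theorem link_lemma {M : Type*} [MetricSpace M] [CompactSpace M] [ConnectedSpace M]
    {ι : Type*} [Fintype ι] [LinearOrder ι]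
    (C : ι → Set M)
    (hclosed : ∀ i, IsClosed (C i))
    (hconn : ∀ i, IsConnected (C i))
    (hint : ∀ i, (interior (C i)).Nonempty)
    (hnest : ∀ i j, i < j → C j ⊂ C i ∨ C i ∩ C j = ∅)
    (hcover : ⋃ i, C i = Set.univ)
    (D : ι → Set M)
    (hD : ∀ i, D i = closure (C i \ ⋃ j > i, C j)) :
    ∀ i j : ι, i < j → C j ⊂ C i → (¬ ∃ k, C j ⊂ C k ∧ C k ⊂ C i) →
      ∃ p ∈ frontier (D i), ∃ q ∈ frontier (D j),
        ∀ π : M → ℝ, Continuous π →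
          (∀ k, ∀ x ∈ frontier (C k), ∀ y ∈ frontier (C k), π x = π y) →
          π p = π q ∧ ∀ z ∈ frontier (C j), π p = π z := by
  intro i j hij hsub hsucc
  rw [hD i, hD j]
  obtain ⟨p, hpD, hpF⟩ := lens_link_aux C hclosed hconn hint hnest hij hsub hsucc
  set Dj := closure (C j \ ⋃ k > j, C k) with hDj
  have hDj_closed : IsClosed Dj := isClosed_closure
  have hDj_sub : Dj ⊆ C j := closure_minimal diff_subset (hclosed j)
  by_cases hcase : ∃ x, x ∈ frontier (C j) ∧ x ∈ Dj
  · -- a frontier point of C j lies in D j; it is a frontier point of D j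
    obtain ⟨x, hxF, hxD⟩ := hcase
    have hxFD : x ∈ frontier Dj := by
      rw [hDj_closed.frontier_eq]
      refine ⟨hxD, fun hxi => ?_⟩
      have : x ∈ interior (C j) := interior_mono hDj_sub hxi
      rw [(hclosed j).frontier_eq] at hxF
      exact hxF.2 this
    refine ⟨p, hpD, x, hxFD, ?_⟩
    intro π _ hc
    exact ⟨hc j p hpF x hxF, fun z hz => hc j p hpF z hz⟩
  · push_neg at hcase
    -- frontier C j is nonempty
    have hjne : (frontier (C j)).Nonempty := by
      by_contra h
      rw [Set.not_nonempty_iff_eq_empty] at h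
      have hclop : IsClopen (C j) := isClopen_iff_frontier_eq_empty.mpr h
      rcases isClopen_iff.mp hclop with h' | h'
      · obtain ⟨y, hy⟩ := hint j
        rw [h'] at hy
        exact absurd (interior_subset hy) (Set.notMem_empty y)
      · apply hsub.ne
        apply Set.Subset.antisymm hsub.1
        rw [h']
        exact Set.subset_univ _
    obtain ⟨x, hx⟩ := hjne
    have hxj : x ∈ C j := by
      rw [(hclosed j).frontier_eq] at hx
      exact hx.1
    have hxnint : x ∉ interior (C j) := by
      rw [(hclosed j).frontier_eq] at hx
      exact hx.2
    -- x belongs to some later piece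
    have hxU : x ∈ ⋃ k > j, C k := by
      by_contra h
      exact hcase x hx (subset_closure ⟨hxj, h⟩)
    obtain ⟨k, hjk, hxk⟩ := mem_iUnion₂.mp hxU
    -- choose a maximal piece containing x
    set S : Set ι := {k : ι | j < k ∧ x ∈ C k} with hS
    obtain ⟨m, hmS, hmax⟩ :=
      Set.Finite.exists_maximalFor C S (Set.toFinite S) ⟨k, hjk, hxk⟩
    have hmj : C m ⊂ C j := by
      rcases hnest j m hmS.1 with h | h
      · exact h
      · exfalso
        have : x ∈ C j ∩ C m := ⟨hxj, hmS.2⟩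
        rw [h] at this
        exact this
    have hsucc2 : ¬ ∃ k', C m ⊂ C k' ∧ C k' ⊂ C j := by
      rintro ⟨k', h1, h2⟩
      have hk'j : j < k' := by
        rcases lt_trichotomy k' j with h | h | h
        · rcases hnest k' j h with h' | h'
          · exact absurd (h2.trans h') (ssubset_irrefl _)
          · exfalso
            have : x ∈ C k' ∩ C j := ⟨h1.1 hmS.2, hxj⟩
            rw [h'] at this
            exact this
        · subst h
          exact absurd h2 (ssubset_irrefl _)
        · exact h
      have := hmax (j := k') ⟨hk'j, h1.1 hmS.2⟩ h1.1
      exact h1.2 this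
    obtain ⟨q, hqD, hqF⟩ := lens_link_aux C hclosed hconn hint hnest hmS.1 hmj hsucc2
    -- x is also on the frontier of C m
    have hxm : x ∈ frontier (C m) := by
      rw [(hclosed m).frontier_eq]
      exact ⟨hmS.2, fun hi => hxnint (interior_mono hmj.1 hi)⟩
    refine ⟨p, hpD, q, hqD, ?_⟩
    intro π _ hc
    have h1 : π q = π x := hc m q hqF x hxm
    have hp2 : ∀ z ∈ frontier (C j), π p = π z := fun z hz => hc j p hpF z hz
    exact ⟨(hp2 x hx).trans h1.symm, hp2⟩
end

section
/- Assume the lens setting with M connected, and let λ : M → ℝ be constant-boundary for the lens. Let i be an index with C i ≠ M, and let λ_i : M → ℝ be a flat extension of λ over D i. Then for every index j such that C j is not a subset of C i, the function λ_i takes the constant value c_i(λ) (the common value of λ on the frontier of C i) at every point of the support D j. -/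
open Set

/-- Two incomparable members of a nested family are disjoint, given maximality. -/
private lemma zv_disj {M ι : Type*} [LinearOrder ι] {C : ι → Set M}
    (hnest : ∀ i j, i < j → C j ⊂ C i ∨ C i ∩ C j = ∅)
    {i m : ι}
    (hmax : ∀ k, i < k → (C k ∩ C i).Nonempty → C m ⊆ C k → C m = C k)
    {j : ι} (hij : i < j) (hjne : (C j ∩ C i).Nonempty) (hjm : ¬ C j ⊆ C m) :
    C m ∩ C j = ∅ := by
  rcases lt_trichotomy j m with h | rfl | h
  · rcases hnest j m h with h2 | h2
    · exact absurd (hmax j hij hjne h2.subset) h2.ne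
    · rw [Set.inter_comm]; exact h2
  · exact absurd subset_rfl hjm
  · rcases hnest m j h with h2 | h2
    · exact absurd h2.subset hjm
    · exact h2

/-- A maximal proper nested piece of `C i` meets the support set. -/
private lemma zv_zpoint {M : Type*} [TopologicalSpace M] {ι : Type*} [Finite ι]
    [LinearOrder ι] {C : ι → Set M}
    (hclosed : ∀ i, IsClosed (C i)) (hconn : ∀ i, IsConnected (C i))
    (hnest : ∀ i j, i < j → C j ⊂ C i ∨ C i ∩ C j = ∅)
    {i m : ι} (him : i < m)
    (hmax : ∀ k, i < k → (C k ∩ C i).Nonempty → C m ⊆ C k → C m = C k)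
    (hmCi : C m ⊂ C i) :
    (C m ∩ closure (C i \ ⋃ k > i, C k)).Nonempty := by
  have h1 : (C i ∩ (C m ∩ closure (C i \ C m))).Nonempty := by
    refine (isPreconnected_closed_iff.mp (hconn i).isPreconnected) (C m)
      (closure (C i \ C m)) (hclosed m) isClosed_closure ?_ ?_ ?_
    · intro y hy
      by_cases h : y ∈ C m
      · exact Or.inl h
      · exact Or.inr (subset_closure ⟨hy, h⟩)
    · obtain ⟨y, hy⟩ := (hconn m).nonempty
      exact ⟨y, hmCi.subset hy, hy⟩
    · obtain ⟨y, hyCi, hyn⟩ := Set.exists_of_ssubset hmCi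
      exact ⟨y, hyCi, subset_closure ⟨hyCi, hyn⟩⟩
  obtain ⟨z, hzCi, hzCm, hzcl⟩ := h1
  set F : Set ι := {j | i < j ∧ (C j ∩ C i).Nonempty ∧ ¬ C j ⊆ C m} with hF
  have hsub : C i \ C m ⊆ (C i \ ⋃ k > i, C k) ∪ ⋃ j ∈ F, C j := by
    rintro y ⟨hyCi, hyCm⟩
    by_cases hy : y ∈ ⋃ k > i, C k
    · obtain ⟨k, hik, hyk⟩ := Set.mem_iUnion₂.mp hy
      refine Or.inr (Set.mem_biUnion ?_ hyk)
      exact ⟨hik, ⟨y, hyk, hyCi⟩, fun hs => hyCm (hs hyk)⟩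
    · exact Or.inl ⟨hyCi, hy⟩
  have hFclosed : IsClosed (⋃ j ∈ F, C j) :=
    Set.Finite.isClosed_biUnion (Set.toFinite F) (fun j _ => hclosed j)
  have hcl : closure (C i \ C m) ⊆ closure (C i \ ⋃ k > i, C k) ∪ ⋃ j ∈ F, C j := by
    have := closure_mono hsub
    rwa [closure_union, hFclosed.closure_eq] at this
  rcases hcl hzcl with h | h
  · exact ⟨z, hzCm, h⟩
  · obtain ⟨j, hjF, hzj⟩ := Set.mem_iUnion₂.mp h
    have hdisj := zv_disj hnest hmax hjF.1 hjF.2.1 hjF.2.2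
    have : z ∈ C m ∩ C j := ⟨hzCm, hzj⟩
    rw [hdisj] at this
    exact this.elim

/-- Boundary bumping: in a compact connected T₂ space, the closure of a connected
component of a proper open set meets the complement of that open set. -/
private lemma zv_bb {X : Type*} [TopologicalSpace X] [CompactSpace X] [T2Space X]
    [ConnectedSpace X] {O : Set X} (hO : IsOpen O) (hO' : O ≠ Set.univ) {x : X}
    (hx : x ∈ O) : (closure (connectedComponentIn O x) ∩ Oᶜ).Nonempty := by
  by_contra h
  rw [Set.not_nonempty_iff_eq_empty] at h
  set R := connectedComponentIn O x with hRdef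
  have hclO : closure R ⊆ O := by
    intro y hy
    by_contra hyO
    exact (Set.eq_empty_iff_forall_notMem.mp h y) ⟨hy, hyO⟩
  have hRx : x ∈ R := mem_connectedComponentIn hx
  have hRpre : IsPreconnected R := isPreconnected_connectedComponentIn
  have hclR : closure R ⊆ R :=
    hRpre.closure.subset_connectedComponentIn (subset_closure hRx) hclO
  have hRclosed : IsClosed R := isClosed_of_closure_subset hclR
  obtain ⟨u, huO, hRu, hcluO⟩ :=
    normal_exists_closure_subset hRclosed hO (connectedComponentIn_subset O x)
  set L := closure u with hLdef
  have hLcomp : IsCompact L := isClosed_closure.isCompact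
  have hxL : x ∈ L := subset_closure (hRu hRx)
  haveI : CompactSpace L := isCompact_iff_compactSpace.mp hLcomp
  set x' : L := ⟨x, hxL⟩ with hx'def
  have hRint : R ⊆ interior L := fun y hy =>
    interior_maximal subset_closure huO (hRu hy)
  have hQR : Subtype.val '' (connectedComponent x') ⊆ R := by
    refine IsPreconnected.subset_connectedComponentIn ?_ ?_ ?_
    · exact isPreconnected_connectedComponent.image _ continuous_subtype_val.continuousOn
    · exact ⟨x', mem_connectedComponent, rfl⟩
    · rintro y ⟨y', _, rfl⟩
      exact hcluO y'.2
  set B : Set L := Subtype.val ⁻¹' (interior L)ᶜ with hBdef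
  have hBclosed : IsClosed B :=
    (isClosed_compl_iff.mpr isOpen_interior).preimage continuous_subtype_val
  have hBcomp : IsCompact B := hBclosed.isCompact
  have hdisj : (B ∩ ⋂ (Z : { Z : Set L // IsClopen Z ∧ x' ∈ Z }), (Z : Set L)) = ∅ := by
    rw [← connectedComponent_eq_iInter_isClopen]
    apply Set.eq_empty_iff_forall_notMem.mpr
    rintro y ⟨hyB, hyQ⟩
    exact hyB (hRint (hQR ⟨y, hyQ, rfl⟩))
  obtain ⟨t, ht⟩ := hBcomp.elim_finite_subfamily_closed _ (fun Z => Z.2.1.isClosed) hdisj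
  set E' : Set L := ⋂ Z ∈ t, (Z : { Z : Set L // IsClopen Z ∧ x' ∈ Z }).1 with hE'def
  have hE'clopen : IsClopen E' := isClopen_biInter_finset (fun Z _ => Z.2.1)
  have hxE' : x' ∈ E' := Set.mem_iInter₂.mpr (fun Z _ => Z.2.2)
  have hE'int : E' ⊆ Subtype.val ⁻¹' (interior L) := by
    intro y hy
    by_contra hy'
    exact (Set.eq_empty_iff_forall_notMem.mp ht y) ⟨hy', hy⟩
  obtain ⟨O₂, hO₂, hpre⟩ : ∃ O₂, IsOpen O₂ ∧ Subtype.val ⁻¹' O₂ = E' :=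
    Topology.IsInducing.subtypeVal.isOpen_iff.mp hE'clopen.isOpen
  set E : Set X := Subtype.val '' E' with hEdef
  have hEx : x ∈ E := ⟨x', hxE', rfl⟩
  have hEclosed : IsClosed E :=
    ((hE'clopen.isClosed.isCompact).image continuous_subtype_val).isClosed
  have hEint : E ⊆ interior L := by
    rintro y ⟨y', hy', rfl⟩
    exact hE'int hy'
  have hEeq : E = O₂ ∩ interior L := by
    apply subset_antisymm
    · rintro y ⟨y', hy', rfl⟩
      rw [← hpre] at hy'
      exact ⟨hy', hE'int (hpre ▸ hy')⟩
    · rintro y ⟨hyO₂, hyint⟩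
      have hyL : y ∈ L := interior_subset hyint
      exact ⟨⟨y, hyL⟩, by rw [← hpre]; exact hyO₂, rfl⟩
  have hEopen : IsOpen E := hEeq ▸ hO₂.inter isOpen_interior
  obtain ⟨y₀, hy₀⟩ := (Set.ne_univ_iff_exists_notMem O).mp hO'
  rcases isClopen_iff.mp ⟨hEclosed, hEopen⟩ with h' | h'
  · rw [h'] at hEx
    exact hEx
  · have : y₀ ∈ E := h' ▸ Set.mem_univ y₀
    exact hy₀ (hcluO (interior_subset (hEint this)))

/-- Zero Varilet Lemma (on the middle space).  In the lens setting with `M`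
connected, let `lam : M → ℝ` be constant-boundary for the lens, let `i` be an
index with `C i ≠ M`, and let `lami` be a flat extension of `lam` over `D i`.
Then for every index `j` with `¬ C j ⊆ C i`, `lami` equals the common value
`c_i(lam)` of `lam` on `frontier (C i)` at every point of `D j`. -/
theorem zero_varilet_lemma {M : Type*} [MetricSpace M] [CompactSpace M] [ConnectedSpace M]
    {ι : Type*} [Fintype ι] [LinearOrder ι]
    (C : ι → Set M)
    (hclosed : ∀ i, IsClosed (C i))
    (hconn : ∀ i, IsConnected (C i))
    (hint : ∀ i, (interior (C i)).Nonempty)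
    (hnest : ∀ i j, i < j → C j ⊂ C i ∨ C i ∩ C j = ∅)
    (hcover : ⋃ i, C i = Set.univ)
    (D : ι → Set M)
    (hD : ∀ i, D i = closure (C i \ ⋃ j > i, C j))
    (lam : M → ℝ) (hlamc : Continuous lam)
    (hlamcb : ∀ k, ∀ x ∈ frontier (C k), ∀ y ∈ frontier (C k), lam x = lam y)
    (i : ι) (hCi : C i ≠ Set.univ)
    (lami : M → ℝ) (hlami_cont : Continuous lami)
    (hlami_agree : ∀ x ∈ D i, lami x = lam x)
    (hlami_flat : ∀ x ∈ (D i)ᶜ, ∀ y ∈ connectedComponentIn (D i)ᶜ x, lami y = lami x) :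
    ∀ j : ι, ¬ C j ⊆ C i → ∀ x ∈ D j, ∀ z ∈ frontier (C i), lami x = lam z := by
  intro j hj x hx z hz
  have hDiCi : D i ⊆ C i := by
    rw [hD i]
    calc closure (C i \ ⋃ j > i, C j) ⊆ closure (C i) := closure_mono Set.diff_subset
      _ = C i := (hclosed i).closure_eq
  have hDiclosed : IsClosed (D i) := by rw [hD i]; exact isClosed_closure
  have hUopen : IsOpen (D i)ᶜ := hDiclosed.isOpen_compl
  -- D i is nonempty
  have hDine : (D i).Nonempty := by
    rw [hD i]
    by_cases hS : ∃ k, i < k ∧ (C k ∩ C i).Nonempty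
    · obtain ⟨k0, hk0⟩ := hS
      set S : Set ι := {k | i < k ∧ (C k ∩ C i).Nonempty} with hSdef
      obtain ⟨m, hmS, hmax0⟩ :=
        Set.Finite.exists_maximalFor C S (Set.toFinite S) ⟨k0, hk0⟩
      have hmax : ∀ k, i < k → (C k ∩ C i).Nonempty → C m ⊆ C k → C m = C k :=
        fun k h1 h2 hsub => subset_antisymm hsub (hmax0 (j := k) ⟨h1, h2⟩ hsub)
      have hmCi : C m ⊂ C i := by
        rcases hnest i m hmS.1 with h | h
        · exact h
        · obtain ⟨y, hy1, hy2⟩ := hmS.2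
          have : y ∈ C i ∩ C m := ⟨hy2, hy1⟩
          rw [h] at this
          exact this.elim
      exact (zv_zpoint hclosed hconn hnest hmS.1 hmax hmCi).mono Set.inter_subset_right
    · obtain ⟨y, hy⟩ := (hconn i).nonempty
      refine ⟨y, subset_closure ⟨hy, fun hmem => ?_⟩⟩
      obtain ⟨k, hik, hyk⟩ := Set.mem_iUnion₂.mp hmem
      exact hS ⟨k, hik, ⟨y, hyk, hy⟩⟩
  -- Main step: lami equals lam z outside C i
  have main : ∀ y₀, y₀ ∉ C i → lami y₀ = lam z := by
    intro y₀ hy₀Ci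
    by_contra hv
    have hy₀U : y₀ ∈ (D i)ᶜ := fun hmem => hy₀Ci (hDiCi hmem)
    set K := connectedComponentIn (D i)ᶜ y₀ with hKdef
    have hKpre : IsPreconnected K := isPreconnected_connectedComponentIn
    have hKv : ∀ w ∈ closure K, lami w = lami y₀ := by
      have hsub : K ⊆ {w | lami w = lami y₀} := fun w hw => hlami_flat y₀ hy₀U w hw
      exact fun w hw =>
        closure_minimal hsub (isClosed_eq hlami_cont continuous_const) hw
    have hclKU : ∀ w, w ∈ closure K → w ∈ (D i)ᶜ → w ∈ K := by
      intro w hwcl hwU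
      have h1 : IsPreconnected (insert w K) := by
        refine hKpre.subset_closure (Set.subset_insert _ _) ?_
        rintro y (rfl | hy)
        · exact hwcl
        · exact subset_closure hy
      have h2 : insert w K ⊆ (D i)ᶜ := by
        rintro y (rfl | hy)
        · exact hwU
        · exact connectedComponentIn_subset _ _ hy
      have h3 := h1.subset_connectedComponentIn
        (Set.mem_insert_iff.mpr (Or.inr (mem_connectedComponentIn hy₀U))) h2
      exact h3 (Set.mem_insert w K)
    -- the closure of K meets D i
    have hT : (closure K ∩ D i).Nonempty := by
      have hO' : (D i)ᶜ ≠ Set.univ := by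
        intro hEq
        obtain ⟨d, hd⟩ := hDine
        have : d ∈ (D i)ᶜ := hEq.symm ▸ Set.mem_univ d
        exact this hd
      have := zv_bb hUopen hO' hy₀U
      rwa [compl_compl] at this
    have hTval : ∀ w, w ∈ closure K → w ∈ D i → lam w = lami y₀ :=
      fun w h1 h2 => (hlami_agree w h2).symm.trans (hKv w h1)
    -- find q in the closure of K on the frontier of C i
    have hq : (closure K ∩ (C i ∩ closure ((C i)ᶜ))).Nonempty := by
      refine (isPreconnected_closed_iff.mp hKpre.closure) (C i) (closure ((C i)ᶜ))
        (hclosed i) isClosed_closure ?_ ?_ ?_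
      · intro y _
        by_cases h : y ∈ C i
        · exact Or.inl h
        · exact Or.inr (subset_closure h)
      · obtain ⟨p, hp1, hp2⟩ := hT
        exact ⟨p, hp1, hDiCi hp2⟩
      · exact ⟨y₀, subset_closure (mem_connectedComponentIn hy₀U), subset_closure hy₀Ci⟩
    obtain ⟨q, hqcl, hqCi, hqcl'⟩ := hq
    have hqfrCi : q ∈ frontier (C i) := by
      rw [(hclosed i).frontier_eq]
      refine ⟨hqCi, ?_⟩
      rw [← Set.mem_compl_iff, ← closure_compl]
      exact hqcl'
    have hqc : lam q = lam z := hlamcb i q hqfrCi z hz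
    have hqnotDi : q ∉ D i := by
      intro hmem
      exact hv (((hKv q hqcl).symm.trans (hlami_agree q hmem)).trans hqc)
    have hqK : q ∈ K := hclKU q hqcl hqnotDi
    have hqU'' : q ∈ ⋃ k > i, C k := by
      by_contra h
      exact hqnotDi (by rw [hD i]; exact subset_closure ⟨hqCi, h⟩)
    obtain ⟨j0, hij0, hqj0⟩ := Set.mem_iUnion₂.mp hqU''
    -- choose a maximal nested piece containing q
    set S0 : Set ι := {k | i < k ∧ (C k ∩ C i).Nonempty ∧ C j0 ⊆ C k} with hS0def
    have hj0S0 : j0 ∈ S0 := ⟨hij0, ⟨q, hqj0, hqCi⟩, subset_rfl⟩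
    obtain ⟨m, hmS0, hmax0⟩ :=
      Set.Finite.exists_maximalFor C S0 (Set.toFinite S0) ⟨j0, hj0S0⟩
    have him : i < m := hmS0.1
    have hmax : ∀ k, i < k → (C k ∩ C i).Nonempty → C m ⊆ C k → C m = C k :=
      fun k h1 h2 hsub => subset_antisymm hsub (hmax0 (j := k) ⟨h1, h2, hmS0.2.2.trans hsub⟩ hsub)
    have hqCm : q ∈ C m := hmS0.2.2 hqj0
    have hmCi : C m ⊂ C i := by
      rcases hnest i m him with h | h
      · exact h
      · obtain ⟨y, hy1, hy2⟩ := hmS0.2.1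
        have : y ∈ C i ∩ C m := ⟨hy2, hy1⟩
        rw [h] at this
        exact this.elim
    have hqfrCm : q ∈ frontier (C m) := by
      rw [(hclosed m).frontier_eq]
      refine ⟨hqCm, ?_⟩
      have : q ∈ closure ((C m)ᶜ) :=
        closure_mono (Set.compl_subset_compl.mpr hmCi.subset) hqcl'
      rw [closure_compl] at this
      exact this
    -- boundary bumping inside C m
    have hCmcomp : IsCompact (C m) := (hclosed m).isCompact
    haveI : CompactSpace (C m) := isCompact_iff_compactSpace.mp hCmcomp
    haveI : ConnectedSpace (C m) := Subtype.connectedSpace (hconn m)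
    set O : Set (C m) := Subtype.val ⁻¹' (D i)ᶜ with hOdef
    have hOopen : IsOpen O := hUopen.preimage continuous_subtype_val
    have hOne : O ≠ Set.univ := by
      obtain ⟨z', hz'Cm, hz'cl⟩ := zv_zpoint hclosed hconn hnest him hmax hmCi
      have hz'Di : z' ∈ D i := by rw [hD i]; exact hz'cl
      intro hEq
      have : (⟨z', hz'Cm⟩ : C m) ∈ O := hEq.symm ▸ Set.mem_univ _
      exact this hz'Di
    have hqO : (⟨q, hqCm⟩ : C m) ∈ O := hqnotDi
    obtain ⟨w', hw'cl, hw'O⟩ := zv_bb hOopen hOne hqO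
    set R : Set (C m) := connectedComponentIn O ⟨q, hqCm⟩ with hRdef
    have hRK : Subtype.val '' R ⊆ K := by
      have h1 : IsPreconnected (Subtype.val '' R) :=
        isPreconnected_connectedComponentIn.image _ continuous_subtype_val.continuousOn
      have h2 : Subtype.val '' R ⊆ (D i)ᶜ := by
        rintro y ⟨y', hy', rfl⟩
        have := connectedComponentIn_subset O ⟨q, hqCm⟩ hy'
        exact this
      have h3 : q ∈ Subtype.val '' R := ⟨⟨q, hqCm⟩, mem_connectedComponentIn hqO, rfl⟩
      have h4 := h1.subset_connectedComponentIn h3 h2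
      rw [← connectedComponentIn_eq hqK] at h4
      exact h4
    have hwclK : (w' : M) ∈ closure K := by
      have h1 : (w' : M) ∈ closure (Subtype.val '' R) :=
        (image_closure_subset_closure_image continuous_subtype_val) ⟨w', hw'cl, rfl⟩
      exact closure_mono hRK h1
    have hwDi : (w' : M) ∈ D i := by
      have := hw'O
      simp only [hOdef, Set.mem_compl_iff, Set.mem_preimage] at this
      exact not_not.mp this
    have hwv : lam w' = lami y₀ := hTval w' hwclK hwDi
    have hwfrCm : (w' : M) ∈ frontier (C m) := by
      rw [(hclosed m).frontier_eq]
      refine ⟨w'.2, ?_⟩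
      have hsub : C i \ ⋃ k > i, C k ⊆ (C m)ᶜ := by
        rintro y ⟨_, hyn⟩ hyCm
        exact hyn (Set.mem_iUnion₂.mpr ⟨m, him, hyCm⟩)
      have h1 : (w' : M) ∈ closure ((C m)ᶜ) := by
        have h2 : (w' : M) ∈ closure (C i \ ⋃ k > i, C k) := by rw [← hD i]; exact hwDi
        exact closure_mono hsub h2
      rw [closure_compl] at h1
      exact h1
    have hfinal : lam w' = lam q := hlamcb m w' hwfrCm q hqfrCm
    exact hv ((hwv.symm.trans hfinal).trans hqc)
  -- conclude for x ∈ D j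
  have hxcl : x ∈ closure ((C i)ᶜ) := by
    have hsub : D j ⊆ closure ((C i)ᶜ) := by
      rw [hD j]
      apply closure_mono
      rintro y ⟨hyCj, hyn⟩
      simp only [Set.mem_compl_iff]
      intro hyCi
      rcases lt_trichotomy j i with hji | rfl | hij
      · exact hyn (Set.mem_iUnion₂.mpr ⟨i, hji, hyCi⟩)
      · exact hj subset_rfl
      · rcases hnest i j hij with h | h
        · exact hj h.subset
        · have : y ∈ C i ∩ C j := ⟨hyCi, hyCj⟩
          rw [h] at this
          exact this.elim
    exact hsub hx
  have hfin : closure ((C i)ᶜ) ⊆ {w | lami w = lam z} :=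
    closure_minimal (fun y hy => main y hy) (isClosed_eq hlami_cont continuous_const)
  exact hfin hxcl
end

section
/- Assume the lens setting with M connected, and let λ : M → ℝ be constant-boundary for the lens. Suppose i₀ is an index with C i₀ = M, and for every index i let λ_i : M → ℝ be a flat extension of λ over D i. Then for every point p ∈ M, λ(p) = λ_{i₀}(p) + Σ_{i ≠ i₀} (λ_i(p) − c_i(λ)), where c_i(λ) is the common value of λ on the frontier of C i and the sum runs over all indices i ≠ i₀. -/
open Set Metric

/-- Boundary bumping: in a compact connected metric space, the closure of a connected
component of the complement of a nonempty closed set meets that set. -/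
theorem adl_bump {X : Type*} [MetricSpace X] [CompactSpace X] [PreconnectedSpace X]
    {F : Set X} (hF : IsClosed F) (hFne : F.Nonempty) {p : X} (hp : p ∉ F) :
    (closure (connectedComponentIn Fᶜ p) ∩ F).Nonempty := by
  by_contra h
  rw [not_nonempty_iff_eq_empty, ← disjoint_iff_inter_eq_empty] at h
  set V := connectedComponentIn Fᶜ p with hVdef
  have hcl : closure V ⊆ Fᶜ := h.subset_compl_right
  have hpU : p ∈ Fᶜ := hp
  have hpV : p ∈ V := mem_connectedComponentIn hpU
  have hVconn : IsConnected V := isConnected_connectedComponentIn_iff.2 hpU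
  have hVsub : V ⊆ Fᶜ := connectedComponentIn_subset _ _
  have hclsub : closure V ⊆ V :=
    hVconn.isPreconnected.closure.subset_connectedComponentIn (subset_closure hpV) hcl
  have hVclosed : IsClosed V := by
    rw [← hclsub.antisymm subset_closure]; exact isClosed_closure
  have hVcomp : IsCompact V := hVclosed.isCompact
  obtain ⟨δ, δpos, hδ⟩ := hVcomp.exists_cthickening_subset_open hF.isOpen_compl hVsub
  set W := Metric.thickening δ V with hWdef
  have hWopen : IsOpen W := Metric.isOpen_thickening
  have hVW : V ⊆ W := Metric.self_subset_thickening δpos V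
  have hclWU : closure W ⊆ Fᶜ :=
    (Metric.closure_thickening_subset_cthickening δ V).trans hδ
  set Y := closure W with hYdef
  have hYcomp : IsCompact Y := isClosed_closure.isCompact
  haveI : CompactSpace Y := isCompact_iff_compactSpace.mp hYcomp
  have hpY : p ∈ Y := subset_closure (hVW hpV)
  set p' : Y := ⟨p, hpY⟩ with hp'def
  have hQV : Subtype.val '' connectedComponent p' ⊆ V := by
    apply IsPreconnected.subset_connectedComponentIn
    · exact isPreconnected_connectedComponent.image _ continuous_subtype_val.continuousOn
    · exact ⟨p', mem_connectedComponent, rfl⟩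
    · intro x hx
      obtain ⟨y, _, rfl⟩ := hx
      exact hclWU y.2
  have hQW' : connectedComponent p' ⊆ (Subtype.val ⁻¹' W : Set Y) := by
    intro x hx
    exact hVW (hQV ⟨x, hx, rfl⟩)
  rw [connectedComponent_eq_iInter_isClopen] at hQW'
  have hWc : IsCompact ((Subtype.val ⁻¹' W : Set Y)ᶜ) :=
    ((hWopen.preimage continuous_subtype_val).isClosed_compl).isCompact
  have hfin : ∃ si : Finset { s : Set Y // IsClopen s ∧ p' ∈ s },
      ¬((Subtype.val ⁻¹' W : Set Y)ᶜ ∩ ⋂ s ∈ si, (s : Set Y)).Nonempty := by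
    by_contra hcon
    push_neg at hcon
    have := hWc.inter_iInter_nonempty (fun s : { s : Set Y // IsClopen s ∧ p' ∈ s } => (s : Set Y))
      (fun s => s.2.1.1) (fun u => hcon u)
    obtain ⟨x, hx1, hx2⟩ := this
    exact hx1 (hQW' hx2)
  obtain ⟨si, hsi⟩ := hfin
  set E : Set Y := ⋂ s ∈ si, (s : Set Y) with hEdef
  have hEclopen : IsClopen E := isClopen_biInter_finset fun s _ => s.2.1
  have hpE : p' ∈ E := mem_iInter₂.2 fun s _ => s.2.2
  have hEW' : E ⊆ (Subtype.val ⁻¹' W : Set Y) := by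
    intro x hx
    by_contra hxW
    exact hsi ⟨x, hxW, hx⟩
  obtain ⟨O, hOopen, hOE⟩ := isOpen_induced_iff.mp hEclopen.2
  have hE'eq : Subtype.val '' E = O ∩ W := by
    apply Set.Subset.antisymm
    · rintro x ⟨y, hy, rfl⟩
      exact ⟨by rw [← hOE] at hy; exact hy, hEW' hy⟩
    · rintro x ⟨hxO, hxW⟩
      exact ⟨⟨x, subset_closure hxW⟩, by rw [← hOE]; exact hxO, rfl⟩
  have hE'open : IsOpen (Subtype.val '' E) := by
    rw [hE'eq]; exact hOopen.inter hWopen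
  have hE'closed : IsClosed (Subtype.val '' E) :=
    (hEclopen.1.isCompact.image continuous_subtype_val).isClosed
  have hE'univ : Subtype.val '' E = univ :=
    IsClopen.eq_univ ⟨hE'closed, hE'open⟩ ⟨p, ⟨p', hpE, rfl⟩⟩
  obtain ⟨q, hq⟩ := hFne
  have : q ∈ Subtype.val '' E := hE'univ ▸ mem_univ q
  obtain ⟨y, hy, rfl⟩ := this
  exact hclWU y.2 hq

/-- A connected, closed, nonempty set covered by a finite nested-or-disjoint family of
closed sets is contained in one member. -/
theorem adl_chain_cover {M : Type*} [TopologicalSpace M] {ι : Type*} [LinearOrder ι]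
    (C : ι → Set M) (hclosed : ∀ i, IsClosed (C i))
    (hnest : ∀ i j, i < j → C j ⊂ C i ∨ C i ∩ C j = ∅)
    {s : Set M} (hs : IsPreconnected s) (hsc : IsClosed s) (hne : s.Nonempty) :
    ∀ S : Finset ι, s ⊆ ⋃ j ∈ S, C j → ∃ j ∈ S, s ⊆ C j := by
  classical
  intro S
  induction S using Finset.strongInductionOn with
  | _ S IH =>
    intro hsub
    obtain ⟨x, hx⟩ := hne
    have hSne : S.Nonempty := by
      have := hsub hx
      simp only [mem_iUnion] at this
      obtain ⟨j, hj, _⟩ := this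
      exact ⟨j, hj⟩
    set a := S.min' hSne with ha
    set S' := (S.erase a).filter (fun j => C a ∩ C j = ∅) with hS'
    have hsub2 : s ⊆ C a ∪ ⋃ j ∈ S', C j := by
      intro y hy
      have := hsub hy
      simp only [mem_iUnion] at this
      obtain ⟨j, hjS, hyj⟩ := this
      by_cases hja : j = a
      · exact Or.inl (hja ▸ hyj)
      · have haj : a < j := lt_of_le_of_ne (S.min'_le j hjS) (Ne.symm hja)
        rcases hnest a j haj with hss | hdis
        · exact Or.inl (hss.1 hyj)
        · refine Or.inr ?_
          simp only [mem_iUnion]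
          exact ⟨j, by simp [hS', Finset.mem_filter, Finset.mem_erase, hja, hjS, hdis], hyj⟩
    have hdisj : Disjoint (C a) (⋃ j ∈ S', C j) := by
      rw [Set.disjoint_iff_inter_eq_empty]
      ext y
      simp only [mem_inter_iff, mem_iUnion, mem_empty_iff_false, iff_false, not_and]
      rintro hya ⟨j, hjS', hyj⟩
      have : C a ∩ C j = ∅ := (Finset.mem_filter.mp hjS').2
      have h2 : y ∈ C a ∩ C j := ⟨hya, hyj⟩
      rw [this] at h2
      exact h2
    have hclosed2 : IsClosed (⋃ j ∈ S', C j) :=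
      Set.Finite.isClosed_biUnion (S'.finite_toSet) (fun j _ => hclosed j)
    rcases (isPreconnected_iff_subset_of_fully_disjoint_closed hsc).mp hs
        (C a) (⋃ j ∈ S', C j) (hclosed a) hclosed2 hsub2 hdisj with hca | hcu
    · exact ⟨a, S.min'_mem hSne, hca⟩
    · have hS'ss : S' ⊂ S := by
        refine Finset.ssubset_iff_of_subset ?_ |>.mpr ?_
        · intro j hj
          exact Finset.mem_of_mem_erase (Finset.mem_filter.mp hj).1
        · exact ⟨a, S.min'_mem hSne, by simp [hS', Finset.mem_filter, Finset.mem_erase]⟩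
      obtain ⟨j, hjS', hsj⟩ := IH S' hS'ss hcu
      exact ⟨j, Finset.mem_of_mem_erase (Finset.mem_filter.mp hjS').1, hsj⟩

/-- A function locally constant along a preconnected set is constant on it. -/
theorem adl_const_of_locally {X : Type*} [TopologicalSpace X] {V : Set X}
    (hV : IsPreconnected V) (f : X → ℝ)
    (hloc : ∀ v ∈ V, ∃ N, IsOpen N ∧ v ∈ N ∧ ∀ w ∈ N ∩ V, f w = f v) :
    ∀ v ∈ V, ∀ w ∈ V, f v = f w := by
  classical
  intro v hv w hw
  by_contra hne
  choose! N hNopen hNmem hNconst using hloc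
  set U₁ := ⋃ (u : X) (_ : u ∈ V ∧ f u = f v), N u with hU₁
  set U₂ := ⋃ (u : X) (_ : u ∈ V ∧ f u ≠ f v), N u with hU₂
  have hU₁o : IsOpen U₁ := isOpen_iUnion fun u => isOpen_iUnion fun hu => hNopen u hu.1
  have hU₂o : IsOpen U₂ := isOpen_iUnion fun u => isOpen_iUnion fun hu => hNopen u hu.1
  have hVsub : V ⊆ U₁ ∪ U₂ := by
    intro u hu
    by_cases h : f u = f v
    · exact Or.inl (mem_iUnion₂.2 ⟨u, ⟨hu, h⟩, hNmem u hu⟩)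
    · exact Or.inr (mem_iUnion₂.2 ⟨u, ⟨hu, h⟩, hNmem u hu⟩)
  have h1 : (V ∩ U₁).Nonempty := ⟨v, hv, mem_iUnion₂.2 ⟨v, ⟨hv, rfl⟩, hNmem v hv⟩⟩
  have h2 : (V ∩ U₂).Nonempty := ⟨w, hw, mem_iUnion₂.2 ⟨w, ⟨hw, fun h => hne h.symm⟩, hNmem w hw⟩⟩
  obtain ⟨x, hxV, hx1, hx2⟩ := hV U₁ U₂ hU₁o hU₂o hVsub h1 h2
  obtain ⟨u₁, ⟨hu₁V, hu₁⟩, hxN₁⟩ := mem_iUnion₂.1 hx1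
  obtain ⟨u₂, ⟨hu₂V, hu₂⟩, hxN₂⟩ := mem_iUnion₂.1 hx2
  have e1 : f x = f u₁ := hNconst u₁ hu₁V x ⟨hxN₁, hxV⟩
  have e2 : f x = f u₂ := hNconst u₂ hu₂V x ⟨hxN₂, hxV⟩
  exact hu₂ (by rw [← e2, e1, hu₁])

/-- Telescoping sum over a finite chain of indices. -/
theorem adl_telescope {ι : Type*} [LinearOrder ι] (c g : ι → ℝ) (L : ℝ) :
    ∀ K : Finset ι, ∀ hK : K.Nonempty,
      g (K.max' hK) = L →
      (∀ i ∈ K, i ≠ K.max' hK → ∀ h : (K.filter (fun j => i < j)).Nonempty,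
        g i = c ((K.filter (fun j => i < j)).min' h)) →
      g (K.min' hK) + ∑ i ∈ K.erase (K.min' hK), (g i - c i) = L := by
  classical
  intro K
  induction K using Finset.strongInductionOn with
  | _ K IH =>
    intro hK hmax hsucc
    by_cases hsing : K.min' hK = K.max' hK
    · have herase : K.erase (K.min' hK) = ∅ := by
        rw [Finset.eq_empty_iff_forall_notMem]
        intro i hi
        have hiK := Finset.mem_of_mem_erase hi
        have : i = K.min' hK :=
          le_antisymm (hsing ▸ K.le_max' i hiK) (K.min'_le i hiK)
        exact (Finset.mem_erase.mp hi).1 this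
      rw [herase, Finset.sum_empty, add_zero, hsing, hmax]
    · set a := K.min' hK with ha
      set K' := K.erase a with hK'
      have hK'ne : K'.Nonempty := ⟨K.max' hK, Finset.mem_erase.mpr ⟨fun h => hsing h.symm, K.max'_mem hK⟩⟩
      have hK'ss : K' ⊂ K := Finset.erase_ssubset (K.min'_mem hK)
      have hK'max : K'.max' hK'ne = K.max' hK := by
        apply le_antisymm
        · exact K.le_max' _ (Finset.mem_of_mem_erase (K'.max'_mem hK'ne))
        · exact K'.le_max' _ (Finset.mem_erase.mpr ⟨fun h => hsing h.symm, K.max'_mem hK⟩)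
      set b := K'.min' hK'ne with hb
      have hbK' : b ∈ K' := K'.min'_mem hK'ne
      have hfilter_a : K.filter (fun j => a < j) = K' := by
        ext j
        simp only [Finset.mem_filter, hK', Finset.mem_erase]
        constructor
        · rintro ⟨hj, hlt⟩; exact ⟨ne_of_gt hlt, hj⟩
        · rintro ⟨hne, hj⟩
          exact ⟨hj, lt_of_le_of_ne (K.min'_le j hj) (Ne.symm hne)⟩
      have hfa_ne : (K.filter (fun j => a < j)).Nonempty := by rw [hfilter_a]; exact hK'ne
      have hga : g a = c b := by
        have := hsucc a (K.min'_mem hK) hsing hfa_ne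
        rw [this]
        congr 1
        apply le_antisymm
        · exact Finset.min'_le _ _ (by rw [hfilter_a]; exact hbK')
        · exact Finset.le_min' _ _ _ (fun y hy => K'.min'_le y (by rw [← hfilter_a]; exact hy))
      have hsucc' : ∀ i ∈ K', i ≠ K'.max' hK'ne →
          ∀ h : (K'.filter (fun j => i < j)).Nonempty,
          g i = c ((K'.filter (fun j => i < j)).min' h) := by
        intro i hi hine h
        have hfil : K'.filter (fun j => i < j) = K.filter (fun j => i < j) := by
          ext j
          simp only [Finset.mem_filter, hK', Finset.mem_erase]
          constructor
          · rintro ⟨⟨_, hj⟩, hlt⟩; exact ⟨hj, hlt⟩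
          · rintro ⟨hj, hlt⟩
            refine ⟨⟨?_, hj⟩, hlt⟩
            rintro rfl
            exact absurd (lt_of_le_of_lt (K.min'_le i (Finset.mem_of_mem_erase hi)) hlt)
              (lt_irrefl _)
        have h2 : (K.filter (fun j => i < j)).Nonempty := by rw [← hfil]; exact h
        have := hsucc i (Finset.mem_of_mem_erase hi) (by rw [← hK'max]; exact hine) h2
        rw [this]
        congr 1
        apply le_antisymm
        · exact Finset.le_min' _ _ _ (fun y hy =>
            Finset.min'_le _ y (by rw [← hfil]; exact hy))
        · exact Finset.le_min' _ _ _ (fun y hy =>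
            Finset.min'_le _ y (by rw [hfil]; exact hy))
      have hIH := IH K' hK'ss hK'ne (by rw [hK'max]; exact hmax) hsucc'
      rw [← hb] at hIH
      have hsum : ∑ i ∈ K.erase a, (g i - c i)
          = (g b - c b) + ∑ i ∈ K'.erase b, (g i - c i) := by
        rw [← hK']
        rw [← Finset.add_sum_erase K' (fun i => g i - c i) hbK']
      rw [hsum, hga]
      ring_nf
      linarith [hIH]


/-- Additive Decomposition Lemma (on the middle space).  In the lens setting
with `M` connected, let `lam : M → ℝ` be constant-boundary for the lens, let
`i₀` be an index with `C i₀ = M`, and for each index `i` let `lamF i` be a flat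
extension of `lam` over `D i`.  With `c i` the common value of `lam` on
`frontier (C i)` for `i ≠ i₀`, every point `p` satisfies
`lam p = lamF i₀ p + ∑_{i ≠ i₀} (lamF i p - c i)`. -/
theorem additive_decomposition {M : Type*} [MetricSpace M] [CompactSpace M] [ConnectedSpace M]
    {ι : Type*} [Fintype ι] [LinearOrder ι]
    (C : ι → Set M)
    (hclosed : ∀ i, IsClosed (C i))
    (hconn : ∀ i, IsConnected (C i))
    (hint : ∀ i, (interior (C i)).Nonempty)
    (hnest : ∀ i j, i < j → C j ⊂ C i ∨ C i ∩ C j = ∅)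
    (hcover : ⋃ i, C i = Set.univ)
    (D : ι → Set M)
    (hD : ∀ i, D i = closure (C i \ ⋃ j > i, C j))
    (lam : M → ℝ) (hlamc : Continuous lam)
    (hlamcb : ∀ k, ∀ x ∈ frontier (C k), ∀ y ∈ frontier (C k), lam x = lam y)
    (i₀ : ι) (hroot : C i₀ = Set.univ)
    (lamF : ι → M → ℝ) (hlamF_cont : ∀ i, Continuous (lamF i))
    (hlamF_agree : ∀ i, ∀ x ∈ D i, lamF i x = lam x)
    (hlamF_flat : ∀ i, ∀ x ∈ (D i)ᶜ, ∀ y ∈ connectedComponentIn (D i)ᶜ x,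
      lamF i y = lamF i x)
    (c : ι → ℝ) (hc : ∀ i, i ≠ i₀ → ∀ z ∈ frontier (C i), lam z = c i) :
    ∀ p : M, lam p = lamF i₀ p + ∑ i ∈ Finset.univ.erase i₀, (lamF i p - c i) := by
  classical
  have hCne : ∀ i, (C i).Nonempty := fun i => ((hint i).mono interior_subset)
  have hmin : ∀ i, i₀ ≤ i := by
    intro i
    by_contra h
    push_neg at h
    rcases hnest i i₀ h with hss | hdis
    · rw [hroot] at hss
      rw [Set.ssubset_iff_subset_ne] at hss
      exact hss.2 (Set.Subset.antisymm (Set.subset_univ _) hss.1).symm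
    · rw [hroot, Set.inter_univ] at hdis
      exact absurd hdis (Set.nonempty_iff_ne_empty.mp (hCne i))
  have hDsub : ∀ i, D i ⊆ C i := by
    intro i; rw [hD i]; exact closure_minimal diff_subset (hclosed i)
  have hDclosed : ∀ i, IsClosed (D i) := fun i => by rw [hD i]; exact isClosed_closure
  have hEsubDi : ∀ i, C i \ ⋃ j > i, C j ⊆ D i := fun i => by rw [hD i]; exact subset_closure
  have hfrZ : ∀ i j, i < j → ∀ z, z ∈ frontier (C i) → z ∈ C j → z ∈ frontier (C j) := by
    intro i j hij z hzf hzj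
    have hzi : z ∈ C i := (hclosed i).frontier_subset hzf
    have hsub : C j ⊆ C i := by
      rcases hnest i j hij with hss | hdis
      · exact hss.subset
      · exfalso
        have : z ∈ C i ∩ C j := ⟨hzi, hzj⟩
        rw [hdis] at this; exact this
    rw [frontier_eq_closure_inter_closure] at hzf ⊢
    exact ⟨subset_closure hzj, closure_mono (compl_subset_compl.mpr hsub) hzf.2⟩
  have hcZ : ∀ i j, i < j → ∀ z, z ∈ frontier (C i) → z ∈ C j → c i = c j := by
    intro i j hij z hzf hzj
    have hi0 : i ≠ i₀ := by
      rintro rfl; rw [hroot, frontier_univ] at hzf; exact hzf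
    have hj0 : j ≠ i₀ := by
      rintro rfl; exact absurd (lt_of_le_of_lt (hmin i) hij) (lt_irrefl _)
    exact (hc i hi0 z hzf).symm.trans (hc j hj0 z (hfrZ i j hij z hzf hzj))
  have hEne : ∀ i, (C i \ ⋃ j > i, C j).Nonempty := by
    intro i
    rw [Set.nonempty_iff_ne_empty]
    intro hE
    have hsub : C i ⊆ ⋃ j ∈ Finset.univ.filter (fun j => i < j), C j := by
      intro x hx
      have hx2 : x ∈ ⋃ j > i, C j := by
        by_contra hxn
        have : x ∈ C i \ ⋃ j > i, C j := ⟨hx, hxn⟩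
        rw [hE] at this; exact this
      simp only [mem_iUnion, exists_prop] at hx2
      obtain ⟨j, hj, hxj⟩ := hx2
      simp only [mem_iUnion, exists_prop]
      exact ⟨j, by simp [hj], hxj⟩
    obtain ⟨j, hjmem, hCij⟩ := adl_chain_cover C hclosed hnest (hconn i).isPreconnected
      (hclosed i) (hCne i) _ hsub
    have hij : i < j := by simpa using (Finset.mem_filter.mp hjmem).2
    rcases hnest i j hij with hss | hdis
    · rw [Set.ssubset_iff_subset_ne] at hss
      exact hss.2 (Set.Subset.antisymm hss.1 hCij)
    · obtain ⟨x, hx⟩ := hCne i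
      have : x ∈ C i ∩ C j := ⟨hx, hCij hx⟩
      rw [hdis] at this; exact this
  have hDne : ∀ i, (D i).Nonempty := fun i => by
    rw [hD i]; exact (hEne i).mono subset_closure
  have hfrD : ∀ i j, i < j → ∀ z, z ∈ D i → z ∈ C j → z ∈ frontier (C j) := by
    intro i j hij z hzD hzj
    rw [frontier_eq_closure_inter_closure]
    refine ⟨subset_closure hzj, ?_⟩
    rw [hD i] at hzD
    refine closure_mono ?_ hzD
    intro x hx hxj
    exact hx.2 (Set.mem_biUnion hij hxj)
  have hCD : ∀ i z, z ∈ C i → z ∉ D i → ∃ j, i < j ∧ z ∈ C j := by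
    intro i z hzC hzD
    have h1 : z ∉ C i \ ⋃ j > i, C j := fun h => hzD (hEsubDi i h)
    have h2 : z ∈ ⋃ j > i, C j := by
      by_contra h; exact h1 ⟨hzC, h⟩
    simpa using h2
  set T : ι → M → Finset ι := fun i v => Finset.univ.filter (fun j => i < j ∧ v ∈ C j) with hT
  set tm : ι → M → ι := fun i v => if h : (T i v).Nonempty then (T i v).min' h else i₀ with htmdef
  set f : ι → M → ℝ := fun i v => if v ∈ C i then c (tm i v) else c i with hf
  have htm : ∀ i v, (T i v).Nonempty →
      i < tm i v ∧ v ∈ C (tm i v) ∧ ∀ j, i < j → v ∈ C j → tm i v ≤ j := by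
    intro i v h
    have h1 : tm i v = (T i v).min' h := by rw [htmdef]; simp [h]
    have h2 := (T i v).min'_mem h
    rw [← h1] at h2
    simp only [hT, Finset.mem_filter] at h2
    refine ⟨h2.2.1, h2.2.2, ?_⟩
    intro j hij hvj
    rw [h1]
    exact Finset.min'_le _ j (by simp only [hT, Finset.mem_filter]; exact ⟨Finset.mem_univ j, hij, hvj⟩)
  have hTne : ∀ i v, v ∈ C i → v ∉ D i → (T i v).Nonempty := by
    intro i v h1 h2
    obtain ⟨j, hij, hvj⟩ := hCD i v h1 h2
    exact ⟨j, by simp only [hT, Finset.mem_filter]; exact ⟨Finset.mem_univ j, hij, hvj⟩⟩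
  have key : ∀ i p, p ∉ D i → lamF i p = f i p := by
    intro i p hpD
    set V := connectedComponentIn (D i)ᶜ p with hV
    have hpU : p ∈ (D i)ᶜ := hpD
    have hpV : p ∈ V := mem_connectedComponentIn hpU
    have hVsub : V ⊆ (D i)ᶜ := connectedComponentIn_subset _ _
    have hVpre : IsPreconnected V := isPreconnected_connectedComponentIn
    have hlamFconst : ∀ y ∈ closure V, lamF i y = lamF i p := by
      intro y hy
      have h1 : V ⊆ {x | lamF i x = lamF i p} := fun y' hy' => hlamF_flat i p hpU y' hy'
      exact closure_minimal h1 (isClosed_eq (hlamF_cont i) continuous_const) hy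
    have hf_loc : ∀ v ∈ V, ∃ N, IsOpen N ∧ v ∈ N ∧ ∀ w ∈ N ∩ V, f i w = f i v := by
      intro v hv
      by_cases hvC : v ∈ C i
      · have hvD : v ∉ D i := hVsub hv
        have hTv := hTne i v hvC hvD
        obtain ⟨ht1, ht2, ht3⟩ := htm i v hTv
        set N₀ := (⋃ j ∈ Finset.univ.filter (fun j => i < j ∧ v ∉ C j), C j)ᶜ with hN₀
        have hN₀open : IsOpen N₀ := by
          rw [hN₀, isOpen_compl_iff]
          exact Set.Finite.isClosed_biUnion (Finset.finite_toSet _) (fun j _ => hclosed j)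
        have hvN₀ : v ∈ N₀ := by
          rw [hN₀]
          simp only [mem_compl_iff, mem_iUnion, exists_prop, not_exists, not_and]
          intro j hj hvj
          exact (Finset.mem_filter.mp hj).2.2 hvj
        have htm_eq : ∀ w, w ∈ N₀ ∩ V → w ∈ C i → tm i w = tm i v := by
          rintro w ⟨hwN, hwV⟩ hwC
          have hwD : w ∉ D i := hVsub hwV
          obtain ⟨hs1, hs2, hs3⟩ := htm i w (hTne i w hwC hwD)
          have hvtm : v ∈ C (tm i w) := by
            by_contra hvn
            exact hwN (Set.mem_biUnion (Finset.mem_filter.mpr ⟨Finset.mem_univ _, hs1, hvn⟩) hs2)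
          have hle : tm i v ≤ tm i w := ht3 _ hs1 hvtm
          rcases lt_or_eq_of_le hle with hlt | heq
          · exfalso
            have hsub : C (tm i w) ⊆ C (tm i v) := by
              rcases hnest (tm i v) (tm i w) hlt with hss | hdis
              · exact hss.subset
              · exfalso
                have : v ∈ C (tm i v) ∩ C (tm i w) := ⟨ht2, hvtm⟩
                rw [hdis] at this; exact this
            exact absurd hlt (not_lt.mpr (hs3 _ ht1 (hsub hs2)))
          · exact heq.symm
        by_cases hvfr : v ∈ closure ((C i)ᶜ)
        · have hvfront : v ∈ frontier (C i) := by
            rw [frontier_eq_closure_inter_closure]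
            exact ⟨subset_closure hvC, hvfr⟩
          have hci : c i = c (tm i v) := hcZ i (tm i v) ht1 v hvfront ht2
          refine ⟨N₀, hN₀open, hvN₀, ?_⟩
          intro w hw
          by_cases hwC : w ∈ C i
          · simp only [hf]; rw [if_pos hwC, if_pos hvC, htm_eq w hw hwC]
          · simp only [hf]; rw [if_neg hwC, if_pos hvC, ← hci]
        · refine ⟨N₀ ∩ (closure ((C i)ᶜ))ᶜ, hN₀open.inter isClosed_closure.isOpen_compl,
            ⟨hvN₀, hvfr⟩, ?_⟩
          rintro w ⟨⟨hwN₀, hwcl⟩, hwV⟩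
          have hwC : w ∈ C i := by
            by_contra h; exact hwcl (subset_closure h)
          simp only [hf]; rw [if_pos hwC, if_pos hvC, htm_eq w ⟨hwN₀, hwV⟩ hwC]
      · refine ⟨(C i)ᶜ, (hclosed i).isOpen_compl, hvC, ?_⟩
        rintro w ⟨hwN, hwV⟩
        simp only [hf]; rw [if_neg hwN, if_neg hvC]
    have hf_const : ∀ v ∈ V, f i v = f i p :=
      fun v hv => adl_const_of_locally hVpre (f i) hf_loc v hv p hpV
    obtain ⟨z, hzcl, hzD⟩ := adl_bump (hDclosed i) (hDne i) hpD
    have hlamFz : lamF i z = lamF i p := hlamFconst z hzcl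
    have hagree : lamF i z = lam z := hlamF_agree i z hzD
    have hzC : z ∈ C i := hDsub i hzD
    have hlz : lam z = f i p := by
      by_cases hzT : (T i z).Nonempty
      · obtain ⟨hu1, hu2, hu3⟩ := htm i z hzT
        have hj0 : tm i z ≠ i₀ := by
          rintro h
          have := lt_of_le_of_lt (hmin i) hu1
          rw [h] at this
          exact absurd this (lt_irrefl _)
        have hlz2 : lam z = c (tm i z) := hc (tm i z) hj0 z (hfrD i (tm i z) hu1 z hzD hu2)
        set N₀ := (⋃ j ∈ Finset.univ.filter (fun j => i < j ∧ z ∉ C j), C j)ᶜ with hN₀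
        have hN₀open : IsOpen N₀ := by
          rw [hN₀, isOpen_compl_iff]
          exact Set.Finite.isClosed_biUnion (Finset.finite_toSet _) (fun j _ => hclosed j)
        have hzN₀ : z ∈ N₀ := by
          rw [hN₀]
          simp only [mem_compl_iff, mem_iUnion, exists_prop, not_exists, not_and]
          intro j hj hzj
          exact (Finset.mem_filter.mp hj).2.2 hzj
        by_cases hcase : z ∈ closure (V \ C i)
        · have hzfr : z ∈ frontier (C i) := by
            rw [frontier_eq_closure_inter_closure]
            exact ⟨subset_closure hzC, closure_mono (fun x hx => hx.2) hcase⟩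
          have hci : c i = c (tm i z) := hcZ i (tm i z) hu1 z hzfr hu2
          obtain ⟨v, hvN, hvV, hvC⟩ := (_root_.mem_closure_iff.mp hcase) N₀ hN₀open hzN₀
          have hfv : f i v = f i p := hf_const v hvV
          rw [hlz2, ← hci, ← hfv]
          simp only [hf]; rw [if_neg hvC]
        · have hz2 : z ∈ closure (V ∩ C i) := by
            have hsplit : closure V ⊆ closure (V ∩ C i) ∪ closure (V \ C i) := by
              rw [← closure_union]
              apply closure_mono
              intro x hx
              by_cases h : x ∈ C i
              · exact Or.inl ⟨hx, h⟩
              · exact Or.inr ⟨hx, h⟩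
            rcases hsplit hzcl with h | h
            · exact h
            · exact absurd h hcase
          obtain ⟨v, hvN, hvV, hvC⟩ := (_root_.mem_closure_iff.mp hz2) N₀ hN₀open hzN₀
          have hvD : v ∉ D i := hVsub hvV
          obtain ⟨hw1, hw2, hw3⟩ := htm i v (hTne i v hvC hvD)
          have hztm : z ∈ C (tm i v) := by
            by_contra hzn
            exact hvN (Set.mem_biUnion (Finset.mem_filter.mpr ⟨Finset.mem_univ _, hw1, hzn⟩) hw2)
          have hle : tm i z ≤ tm i v := hu3 _ hw1 hztm
          have heq : tm i v = tm i z := by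
            rcases lt_or_eq_of_le hle with hlt | he
            · exfalso
              have hsub : C (tm i v) ⊆ C (tm i z) := by
                rcases hnest (tm i z) (tm i v) hlt with hss | hdis
                · exact hss.subset
                · exfalso
                  have : z ∈ C (tm i z) ∩ C (tm i v) := ⟨hu2, hztm⟩
                  rw [hdis] at this; exact this
              exact absurd hlt (not_lt.mpr (hw3 _ hu1 (hsub hw2)))
            · exact he.symm
          have hfv : f i v = f i p := hf_const v hvV
          rw [hlz2, ← heq, ← hfv]
          simp only [hf]; rw [if_pos hvC]
      · set N₀ := (⋃ j ∈ Finset.univ.filter (fun j => i < j), C j)ᶜ with hN₀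
        have hN₀open : IsOpen N₀ := by
          rw [hN₀, isOpen_compl_iff]
          exact Set.Finite.isClosed_biUnion (Finset.finite_toSet _) (fun j _ => hclosed j)
        have hzN₀ : z ∈ N₀ := by
          rw [hN₀]
          simp only [mem_compl_iff, mem_iUnion, exists_prop, not_exists, not_and]
          intro j hj hzj
          refine hzT ⟨j, ?_⟩
          simp only [hT, Finset.mem_filter]
          exact ⟨Finset.mem_univ _, (Finset.mem_filter.mp hj).2, hzj⟩
        have hNV : N₀ ∩ V ⊆ (C i)ᶜ := by
          rintro w ⟨hwN, hwV⟩ hwC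
          have hwE : w ∈ C i \ ⋃ j > i, C j := by
            refine ⟨hwC, ?_⟩
            intro hm
            simp only [mem_iUnion, exists_prop] at hm
            obtain ⟨j, hij, hwj⟩ := hm
            exact hwN (Set.mem_biUnion (Finset.mem_filter.mpr ⟨Finset.mem_univ _, hij⟩) hwj)
          exact (hVsub hwV) (hEsubDi i hwE)
        have hz2 : z ∈ closure (N₀ ∩ V) := by
          have hsplit : closure V ⊆ closure (N₀ ∩ V) ∪ closure (V \ N₀) := by
            rw [← closure_union]
            apply closure_mono
            intro x hx
            by_cases h : x ∈ N₀
            · exact Or.inl ⟨h, hx⟩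
            · exact Or.inr ⟨hx, h⟩
          rcases hsplit hzcl with h | h
          · exact h
          · exfalso
            have hcl : closure (V \ N₀) ⊆ ⋃ j ∈ Finset.univ.filter (fun j => i < j), C j := by
              apply closure_minimal
              · intro x hx
                have := hx.2
                rw [hN₀] at this
                simpa using this
              · exact Set.Finite.isClosed_biUnion (Finset.finite_toSet _) (fun j _ => hclosed j)
            have := hcl h
            rw [hN₀] at hzN₀
            exact hzN₀ this
        have hzfr : z ∈ frontier (C i) := by
          rw [frontier_eq_closure_inter_closure]
          refine ⟨subset_closure hzC, ?_⟩
          exact closure_mono hNV hz2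
        have hi0 : i ≠ i₀ := by
          rintro rfl; rw [hroot, frontier_univ] at hzfr; exact hzfr
        have hlz2 : lam z = c i := hc i hi0 z hzfr
        obtain ⟨v, hv⟩ := closure_nonempty_iff.mp ⟨z, hz2⟩
        have hvCn : v ∉ C i := hNV hv
        have hfv : f i v = f i p := hf_const v hv.2
        rw [hlz2, ← hfv]
        simp only [hf]; rw [if_neg hvCn]
    rw [← hlz, ← hagree, hlamFz]
  intro p
  set K := Finset.univ.filter (fun i => p ∈ C i) with hK
  have hi₀K : i₀ ∈ K := by
    simp only [hK, Finset.mem_filter]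
    exact ⟨Finset.mem_univ _, by rw [hroot]; trivial⟩
  have hKne : K.Nonempty := ⟨i₀, hi₀K⟩
  have hKmin : K.min' hKne = i₀ := le_antisymm (K.min'_le i₀ hi₀K) (Finset.le_min' _ _ _ (fun y _ => hmin y))
  have hpk : p ∈ C (K.max' hKne) := by
    have := K.max'_mem hKne
    simp only [hK, Finset.mem_filter] at this
    exact this.2
  have hpE : p ∈ C (K.max' hKne) \ ⋃ j > (K.max' hKne), C j := by
    refine ⟨hpk, ?_⟩
    intro h
    simp only [mem_iUnion, exists_prop] at h
    obtain ⟨j, hj, hpj⟩ := h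
    have hjK : j ∈ K := by simp only [hK, Finset.mem_filter]; exact ⟨Finset.mem_univ _, hpj⟩
    exact absurd (K.le_max' j hjK) (not_le.mpr hj)
  have hpDk : p ∈ D (K.max' hKne) := hEsubDi _ hpE
  have hgk : lamF (K.max' hKne) p = lam p := hlamF_agree _ p hpDk
  have hsucc : ∀ i ∈ K, i ≠ K.max' hKne → ∀ h : (K.filter (fun j => i < j)).Nonempty,
      lamF i p = c ((K.filter (fun j => i < j)).min' h) := by
    intro i hiK hik h
    have hpCi : p ∈ C i := by
      simp only [hK, Finset.mem_filter] at hiK; exact hiK.2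
    set b := (K.filter (fun j => i < j)).min' h with hb
    have hbmem := Finset.min'_mem _ h
    rw [← hb] at hbmem
    have hbK : b ∈ K := (Finset.mem_filter.mp hbmem).1
    have hib : i < b := (Finset.mem_filter.mp hbmem).2
    have hpCb : p ∈ C b := by
      simp only [hK, Finset.mem_filter] at hbK; exact hbK.2
    have hb0 : b ≠ i₀ := by
      rintro rfl
      exact absurd (lt_of_le_of_lt (hmin i) hib) (lt_irrefl _)
    by_cases hpDi : p ∈ D i
    · rw [hlamF_agree i p hpDi]
      exact hc b hb0 p (hfrD i b hib p hpDi hpCb)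
    · rw [key i p hpDi]
      have hTp : (T i p).Nonempty := hTne i p hpCi hpDi
      obtain ⟨hx1, hx2, hx3⟩ := htm i p hTp
      have htmb : tm i p = b := by
        apply le_antisymm
        · exact hx3 b hib hpCb
        · rw [hb]
          exact Finset.min'_le _ _ (Finset.mem_filter.mpr
            ⟨by simp only [hK, Finset.mem_filter]; exact ⟨Finset.mem_univ _, hx2⟩, hx1⟩)
      simp only [hf]; rw [if_pos hpCi, htmb]
  have htel := adl_telescope c (fun i => lamF i p) (lam p) K hKne hgk hsucc
  rw [hKmin] at htel
  have hzero : ∀ i ∈ Finset.univ.erase i₀, i ∉ K.erase i₀ → lamF i p - c i = 0 := by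
    intro i hi hiK
    have hii₀ : i ≠ i₀ := (Finset.mem_erase.mp hi).1
    have hiKn : i ∉ K := fun h => hiK (Finset.mem_erase.mpr ⟨hii₀, h⟩)
    have hpCi : p ∉ C i := fun h => hiKn (by simp only [hK, Finset.mem_filter]; exact ⟨Finset.mem_univ _, h⟩)
    have hpDi : p ∉ D i := fun h => hpCi (hDsub i h)
    rw [key i p hpDi]
    simp only [hf]; rw [if_neg hpCi]; ring
  have hsumeq : ∑ i ∈ K.erase i₀, (lamF i p - c i) = ∑ i ∈ Finset.univ.erase i₀, (lamF i p - c i) :=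
    Finset.sum_subset (Finset.erase_subset_erase i₀ (Finset.subset_univ K)) hzero
  rw [← hsumeq]
  exact htel.symm
end

section
/- Assume the lens setting with M connected, and let λ : M → ℝ be constant-boundary for the lens. Suppose i₀ is an index with C i₀ = M, for every index i let λ_i : M → ℝ be a flat extension of λ over D i, and let b : ι → ℝ be arbitrary coefficients. Define h : M → ℝ by h(p) = b_{i₀}·λ_{i₀}(p) + Σ_{i ≠ i₀} b_i·(λ_i(p) − c_i(λ)). Then for every index i there is a constant k_i ∈ ℝ such that h(p) = b_i·λ(p) + k_i for every p ∈ D i; moreover k_{i₀} = 0, i.e. h agrees with b_{i₀}·λ on D i₀. -/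
set_option linter.unusedSectionVars false
set_option linter.unusedVariables false

open Set
open scoped Classical

section FFLAux

variable {M : Type*} [MetricSpace M] [CompactSpace M] [ConnectedSpace M]
variable {ι : Type*} [Fintype ι] [LinearOrder ι]

/-- Absorption: a closure point of a connected component of an open set that lies in the
set belongs to the component. -/
lemma ffl_mem_of_closure_ccIn {G : Set M} {x z : M}
    (hz : z ∈ closure (connectedComponentIn G x)) (hzG : z ∈ G) (hx : x ∈ G) :
    z ∈ connectedComponentIn G x := by
  have hU : IsPreconnected (connectedComponentIn G x) := isPreconnected_connectedComponentIn
  have hins : IsPreconnected (insert z (connectedComponentIn G x)) := by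
    refine hU.subset_closure (subset_insert _ _) ?_
    intro y hy
    rcases hy with rfl | hy
    · exact hz
    · exact subset_closure hy
  have hsub : insert z (connectedComponentIn G x) ⊆ G := by
    refine insert_subset hzG (connectedComponentIn_subset _ _)
  have hxmem : x ∈ insert z (connectedComponentIn G x) :=
    mem_insert_of_mem _ (mem_connectedComponentIn hx)
  exact hins.subset_connectedComponentIn hxmem hsub (mem_insert _ _)

/-- Boundary bumping, closed version. -/
lemma ffl_closed_bump {F : Set M} (hF : IsClosed F) (hFne : F ≠ Set.univ) {x : M}
    (hx : x ∈ F) : (connectedComponentIn F x ∩ closure Fᶜ).Nonempty := by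
  by_contra hemp
  rw [Set.not_nonempty_iff_eq_empty] at hemp
  -- work in the subtype F
  have : CompactSpace F := isCompact_iff_compactSpace.mp (hF.isCompact)
  set x' : F := ⟨x, hx⟩
  have hcc : connectedComponentIn F x = Subtype.val '' connectedComponent x' :=
    connectedComponentIn_eq_image hx
  set S : Set F := Subtype.val ⁻¹' (closure Fᶜ) with hS
  have hScl : IsClosed S := (isClosed_closure).preimage continuous_subtype_val
  have hdisj : connectedComponent x' ∩ S = ∅ := by
    rw [Set.eq_empty_iff_forall_notMem]
    rintro y ⟨hy1, hy2⟩
    exact Set.eq_empty_iff_forall_notMem.mp hemp y.1 ⟨hcc ▸ ⟨y, hy1, rfl⟩, hy2⟩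
  -- quasicomponent separation
  have hiInter := connectedComponent_eq_iInter_isClopen x'
  have hScomp : IsCompact S := hScl.isCompact
  have hcover : S ⊆ ⋃ Z : { Z : Set F // IsClopen Z ∧ x' ∈ Z }, (Z : Set F)ᶜ := by
    intro s hs
    by_contra hns
    simp only [mem_iUnion, mem_compl_iff, not_exists, not_not] at hns
    have : s ∈ connectedComponent x' := by
      rw [hiInter, mem_iInter]; exact fun Z => hns Z
    exact (Set.eq_empty_iff_forall_notMem.mp hdisj s) ⟨this, hs⟩
  obtain ⟨t, ht⟩ := hScomp.elim_finite_subcover _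
    (fun Z : { Z : Set F // IsClopen Z ∧ x' ∈ Z } => Z.2.1.compl.isOpen) hcover
  set V : Set F := ⋂ Z ∈ t, (Z : Set F) with hV
  have hVclopen : IsClopen V := isClopen_biInter_finset fun Z _ => Z.2.1
  have hxV : x' ∈ V := mem_iInter₂.mpr fun Z _ => Z.2.2
  have hVS : V ∩ S = ∅ := by
    rw [Set.eq_empty_iff_forall_notMem]
    rintro s ⟨hs1, hs2⟩
    obtain ⟨Z, hZt, hZ⟩ := mem_iUnion₂.mp (ht hs2)
    exact hZ (mem_iInter₂.mp hs1 Z hZt)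
  -- push forward to M
  set V' : Set M := Subtype.val '' V with hV'
  have hV'closed : IsClosed V' :=
    (hVclopen.1.isCompact.image continuous_subtype_val).isClosed
  have hV'int : V' ⊆ interior F := by
    rintro y ⟨s, hsV, rfl⟩
    have hsS : (s : M) ∉ closure Fᶜ := by
      intro hmem
      exact (Set.eq_empty_iff_forall_notMem.mp hVS s) ⟨hsV, hmem⟩
    have : (s : M) ∈ F := s.2
    rw [closure_compl, mem_compl_iff, not_not] at hsS
    exact hsS
  obtain ⟨W, hWopen, hWV⟩ := isOpen_induced_iff.mp hVclopen.2
  have hV'open : IsOpen V' := by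
    have : V' = W ∩ interior F := by
      apply Set.Subset.antisymm
      · rintro y ⟨s, hsV, rfl⟩
        exact ⟨by { have := hWV ▸ hsV; exact this }, hV'int ⟨s, hsV, rfl⟩⟩
      · rintro y ⟨hyW, hyF⟩
        have hyF' : y ∈ F := interior_subset hyF
        exact ⟨⟨y, hyF'⟩, by { rw [← hWV] at *; exact hyW }, rfl⟩
    rw [this]; exact hWopen.inter isOpen_interior
  have hV'ne : V'.Nonempty := ⟨x, ⟨x', hxV, rfl⟩⟩
  have : V' = Set.univ := IsClopen.eq_univ ⟨hV'closed, hV'open⟩ hV'ne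
  apply hFne
  apply Set.eq_univ_of_univ_subset
  rw [← this]
  exact (hV'int.trans interior_subset)

/-- Boundary bumping, open version. -/
lemma ffl_open_bump {G : Set M} (hG : IsOpen G) (hGne : G ≠ Set.univ) {x : M}
    (hx : x ∈ G) : (closure (connectedComponentIn G x) ∩ Gᶜ).Nonempty := by
  by_contra hemp
  rw [Set.not_nonempty_iff_eq_empty] at hemp
  set U := connectedComponentIn G x with hU
  have hUG : closure U ⊆ G := by
    intro z hz
    by_contra hzG
    exact (Set.eq_empty_iff_forall_notMem.mp hemp z) ⟨hz, hzG⟩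
  have hUclosed : closure U ⊆ U := fun z hz => ffl_mem_of_closure_ccIn hz (hUG hz) hx
  have hUcl : IsClosed U := isClosed_of_closure_subset hUclosed
  obtain ⟨u, huo, hUu, hcu⟩ := normal_exists_closure_subset hUcl hG
    ((subset_closure).trans hUG)
  set F := closure u with hF
  have hFne : F ≠ Set.univ := fun hFu => hGne (Set.eq_univ_of_univ_subset (hFu ▸ hcu))
  have hxF : x ∈ F := subset_closure (hUu (mem_connectedComponentIn hx))
  have hKU : connectedComponentIn F x = U := by
    apply Set.Subset.antisymm
    · exact (isPreconnected_connectedComponentIn).subset_connectedComponentIn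
        (mem_connectedComponentIn hxF) ((connectedComponentIn_subset _ _).trans hcu)
    · exact (isPreconnected_connectedComponentIn).subset_connectedComponentIn
        (mem_connectedComponentIn hx) (hUu.trans subset_closure)
  obtain ⟨z, hz1, hz2⟩ := ffl_closed_bump isClosed_closure hFne hxF
  rw [hKU] at hz1
  have hzu : z ∈ u := hUu hz1
  have : z ∈ closure uᶜ :=
    closure_mono (compl_subset_compl.mpr (subset_closure : u ⊆ closure u)) hz2
  rw [closure_compl, huo.interior_eq] at this
  exact this hzu

lemma ffl_frontier_nonempty {s : Set M} (h1 : s.Nonempty) (h2 : s ≠ Set.univ) :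
    (frontier s).Nonempty := by
  by_contra hemp
  rw [Set.not_nonempty_iff_eq_empty] at hemp
  rcases isClopen_iff.mp (isClopen_iff_frontier_eq_empty.mpr hemp) with h | h
  · exact h1.ne_empty h
  · exact h2 h

def FFLMaxChild (C : ι → Set M) (j t : ι) : Prop :=
  j < t ∧ C t ⊂ C j ∧ ∀ s, j < s → C s ⊂ C j → ¬ C t ⊂ C s

section Lens

variable {C : ι → Set M} {D : ι → Set M}

lemma ffl_preconnected_split {s A B : Set M} (hs : IsPreconnected s) (hA : IsClosed A)
    (hB : IsClosed B) (hcov : s ⊆ A ∪ B)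
    (hAB : ∀ p ∈ s, p ∈ A → p ∈ B → False)
    (hsA : ∃ p ∈ s, p ∉ B) (hsB : ∃ p ∈ s, p ∉ A) : False := by
  obtain ⟨q, hqs, hq1, hq2⟩ := hs Bᶜ Aᶜ hB.isOpen_compl hA.isOpen_compl
    (by
      intro p hp
      rcases hcov hp with h | h
      · by_cases hpB : p ∈ B
        · exact Or.inr fun hpA => hAB p hp hpA hpB
        · exact Or.inl hpB
      · exact Or.inr fun hpA => hAB p hp hpA h)
    (by obtain ⟨p, hp1, hp2⟩ := hsA; exact ⟨p, hp1, hp2⟩)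
    (by obtain ⟨p, hp1, hp2⟩ := hsB; exact ⟨p, hp1, hp2⟩)
  rcases hcov hqs with h | h
  · exact hq2 h
  · exact hq1 h

lemma ffl_exists_maxchild (hnest : ∀ i j, i < j → C j ⊂ C i ∨ C i ∩ C j = ∅)
    {j t₀ : ι} (h1 : j < t₀) (h2 : C t₀ ⊂ C j) :
    ∃ s, FFLMaxChild C j s ∧ C t₀ ⊆ C s := by
  set S : Set ι := {t | j < t ∧ C t ⊂ C j ∧ C t₀ ⊆ C t} with hS
  obtain ⟨s, hsS, hmax⟩ := Set.Finite.exists_maximalFor C S (Set.toFinite S)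
    ⟨t₀, h1, h2, subset_rfl⟩
  refine ⟨s, ⟨hsS.1, hsS.2.1, ?_⟩, hsS.2.2⟩
  intro t hjt htj hst
  have htS : t ∈ S := ⟨hjt, htj, hsS.2.2.trans hst.subset⟩
  exact hst.2 (hmax htS hst.subset)

lemma ffl_maxchild_disjoint (hnest : ∀ i j, i < j → C j ⊂ C i ∨ C i ∩ C j = ∅)
    {j t t' : ι} (ht : FFLMaxChild C j t) (ht' : FFLMaxChild C j t') (hne : t ≠ t') :
    C t ∩ C t' = ∅ := by
  rcases lt_or_gt_of_ne hne with h | h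
  · rcases hnest t t' h with hss | hdis
    · exact absurd hss (by intro hss'; exact ht'.2.2 t ht.1 ht.2.1 hss')
    · exact hdis
  · rcases hnest t' t h with hss | hdis
    · exact absurd hss (by intro hss'; exact ht.2.2 t' ht'.1 ht'.2.1 hss')
    · rw [Set.inter_comm]; exact hdis

lemma ffl_D_closed (hD : ∀ i, D i = closure (C i \ ⋃ j > i, C j)) (j : ι) :
    IsClosed (D j) := by rw [hD]; exact isClosed_closure

lemma ffl_D_subset (hclosed : ∀ i, IsClosed (C i))
    (hD : ∀ i, D i = closure (C i \ ⋃ j > i, C j)) (j : ι) : D j ⊆ C j := by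
  rw [hD]
  exact closure_minimal diff_subset (hclosed j)

lemma ffl_base_subset (hD : ∀ i, D i = closure (C i \ ⋃ j > i, C j)) (j : ι) :
    C j \ ⋃ t > j, C t ⊆ D j := by rw [hD]; exact subset_closure

lemma ffl_D_sub_closure_compl (hD : ∀ i, D i = closure (C i \ ⋃ j > i, C j))
    {j t : ι} (h : j < t) : D j ⊆ closure (C t)ᶜ := by
  rw [hD]
  apply closure_mono
  intro p hp
  intro hpt
  exact hp.2 (Set.mem_biUnion h hpt)

lemma ffl_mem_child (hnest : ∀ i j, i < j → C j ⊂ C i ∨ C i ∩ C j = ∅)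
    (hD : ∀ i, D i = closure (C i \ ⋃ j > i, C j))
    {j : ι} {p : M} (hp : p ∈ C j) (hpD : p ∉ D j) :
    ∃ t, j < t ∧ C t ⊂ C j ∧ p ∈ C t := by
  have : p ∈ ⋃ t > j, C t := by
    by_contra hnu
    exact hpD (ffl_base_subset hD j ⟨hp, hnu⟩)
  obtain ⟨t, hjt, hpt⟩ := Set.mem_iUnion₂.mp this
  rcases hnest j t hjt with hss | hdis
  · exact ⟨t, hjt, hss, hpt⟩
  · exact absurd hdis (by rw [Set.eq_empty_iff_forall_notMem] at *; exact fun h => h p ⟨hp, hpt⟩)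

lemma ffl_mem_maxchild (hnest : ∀ i j, i < j → C j ⊂ C i ∨ C i ∩ C j = ∅)
    (hD : ∀ i, D i = closure (C i \ ⋃ j > i, C j))
    {j : ι} {p : M} (hp : p ∈ C j) (hpD : p ∉ D j) :
    ∃ t, FFLMaxChild C j t ∧ p ∈ C t := by
  obtain ⟨t, hjt, hss, hpt⟩ := ffl_mem_child hnest hD hp hpD
  obtain ⟨s, hs, hts⟩ := ffl_exists_maxchild hnest hjt hss
  exact ⟨s, hs, hts hpt⟩

lemma ffl_D_nonempty (hclosed : ∀ i, IsClosed (C i)) (hconn : ∀ i, IsConnected (C i))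
    (hint : ∀ i, (interior (C i)).Nonempty)
    (hnest : ∀ i j, i < j → C j ⊂ C i ∨ C i ∩ C j = ∅)
    (hD : ∀ i, D i = closure (C i \ ⋃ j > i, C j)) (j : ι) :
    (D j).Nonempty := by
  by_contra hemp
  rw [Set.not_nonempty_iff_eq_empty] at hemp
  have hCne : (C j).Nonempty := (hint j).mono interior_subset
  obtain ⟨p₀, hp₀⟩ := hCne
  have hpD : ∀ q : M, q ∉ D j := by rw [hemp]; simp
  obtain ⟨s₀, hs₀, hp₀s₀⟩ := ffl_mem_maxchild hnest hD hp₀ (hpD p₀)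
  set B : Set M := ⋃ t, if FFLMaxChild C j t ∧ t ≠ s₀ then C t else ∅ with hB
  have hBclosed : IsClosed B := by
    apply isClosed_iUnion_of_finite
    intro t
    split_ifs
    · exact hclosed t
    · exact isClosed_empty
  have hBdisj : C s₀ ∩ B = ∅ := by
    rw [Set.eq_empty_iff_forall_notMem]
    rintro q ⟨hq1, hq2⟩
    obtain ⟨t, hqt⟩ := Set.mem_iUnion.mp hq2
    by_cases hc : FFLMaxChild C j t ∧ t ≠ s₀
    · rw [if_pos hc] at hqt
      have := ffl_maxchild_disjoint hnest hs₀ hc.1 (Ne.symm hc.2)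
      exact (Set.eq_empty_iff_forall_notMem.mp this q) ⟨hq1, hqt⟩
    · rw [if_neg hc] at hqt; exact hqt
  have hcov : C j ⊆ C s₀ ∪ B := by
    intro q hq
    obtain ⟨t, ht, hqt⟩ := ffl_mem_maxchild hnest hD hq (hpD q)
    by_cases hts : t = s₀
    · exact Or.inl (hts ▸ hqt)
    · exact Or.inr (Set.mem_iUnion.mpr ⟨t, by rw [if_pos ⟨ht, hts⟩]; exact hqt⟩)
  have hBne : ∃ q ∈ C j, q ∉ C s₀ := by
    by_contra hno
    push_neg at hno
    exact hs₀.2.1.ne (Set.Subset.antisymm hs₀.2.1.subset hno)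
  obtain ⟨q₀, hq₀, hq₀s⟩ := hBne
  exact ffl_preconnected_split (hconn j).isPreconnected (hclosed s₀) hBclosed hcov
    (fun p _ hp1 hp2 => (Set.eq_empty_iff_forall_notMem.mp hBdisj p) ⟨hp1, hp2⟩)
    ⟨p₀, hp₀, fun hmem => (Set.eq_empty_iff_forall_notMem.mp hBdisj p₀) ⟨hp₀s₀, hmem⟩⟩
    ⟨q₀, hq₀, hq₀s⟩

end Lens

section Main
variable {C : ι → Set M} {D : ι → Set M} {lam : M → ℝ} {lamF : ι → M → ℝ}

lemma ffl_main
    (hclosed : ∀ i, IsClosed (C i)) (hconn : ∀ i, IsConnected (C i))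
    (hint : ∀ i, (interior (C i)).Nonempty)
    (hnest : ∀ i j, i < j → C j ⊂ C i ∨ C i ∩ C j = ∅)
    (hD : ∀ i, D i = closure (C i \ ⋃ j > i, C j))
    (hlamcb : ∀ k, ∀ x ∈ frontier (C k), ∀ y ∈ frontier (C k), lam x = lam y)
    (hlamF_cont : ∀ i, Continuous (lamF i))
    (hlamF_agree : ∀ i, ∀ x ∈ D i, lamF i x = lam x)
    (hlamF_flat : ∀ i, ∀ x ∈ (D i)ᶜ, ∀ y ∈ connectedComponentIn (D i)ᶜ x,
      lamF i y = lamF i x)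
    {j : ι} {p : M} (hp : p ∉ D j) :
    (∀ t, FFLMaxChild C j t →
      ((closure (connectedComponentIn (D j)ᶜ p) ∩ C t).Nonempty) →
      ∀ w ∈ frontier (C t), lam w = lamF j p) ∧
    ((closure (connectedComponentIn (D j)ᶜ p) \ C j).Nonempty →
      ∀ w ∈ frontier (C j), lam w = lamF j p) := by
  set O : Set M := (D j)ᶜ with hO
  set U : Set M := connectedComponentIn O p with hU
  set K : Set M := closure U with hK
  set v : ℝ := lamF j p with hv
  have hOopen : IsOpen O := (ffl_D_closed hD j).isOpen_compl
  have hpO : p ∈ O := hp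
  have hOne : O ≠ Set.univ := by
    intro hOu
    have hDe : D j = ∅ := by rw [← compl_compl (D j), ← hO, hOu, compl_univ]
    exact (ffl_D_nonempty hclosed hconn hint hnest hD j).ne_empty hDe
  have hKpre : IsPreconnected K := isPreconnected_connectedComponentIn.closure
  have hfK : ∀ y ∈ K, lamF j y = v := by
    have hcl : IsClosed {y | lamF j y = v} := isClosed_eq (hlamF_cont j) continuous_const
    have hsub : U ⊆ {y | lamF j y = v} := fun y hy => hlamF_flat j p hp y hy
    exact fun y hy => closure_minimal hsub hcl hy
  have hKD : (K ∩ D j).Nonempty := by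
    have := ffl_open_bump hOopen hOne hpO
    rwa [hO, compl_compl] at this
  have hlamKD : ∀ z, z ∈ K → z ∈ D j → lam z = v := fun z hz1 hz2 => by
    rw [← hlamF_agree j z hz2]; exact hfK z hz1
  -- frontier facts
  have hfr1 : ∀ t, FFLMaxChild C j t → ∀ q, q ∈ D j → q ∈ C t → q ∈ frontier (C t) := by
    intro t ht q hqD hqt
    rw [frontier_eq_closure_inter_closure]
    exact ⟨subset_closure hqt, ffl_D_sub_closure_compl hD ht.1 hqD⟩
  have hfr2 : ∀ t, FFLMaxChild C j t → ∀ q, q ∈ closure (C j)ᶜ → q ∈ C t →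
      q ∈ frontier (C t) ∧ q ∈ frontier (C j) := by
    intro t ht q hqc hqt
    constructor
    · rw [frontier_eq_closure_inter_closure]
      exact ⟨subset_closure hqt, closure_mono (compl_subset_compl.mpr ht.2.1.subset) hqc⟩
    · rw [frontier_eq_closure_inter_closure]
      exact ⟨subset_closure (ht.2.1.subset hqt), hqc⟩
  have hfrD : ∀ q, q ∈ D j → q ∈ closure (C j)ᶜ → q ∈ frontier (C j) := fun q h1 h2 => by
    rw [frontier_eq_closure_inter_closure]
    exact ⟨subset_closure (ffl_D_subset hclosed hD j h1), h2⟩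
  -- good predicates
  set GT : ι → Prop := fun t => ∀ w ∈ frontier (C t), lam w = v with hGT
  set GJ : Prop := ∀ w ∈ frontier (C j), lam w = v with hGJ
  have hgoodT_of : ∀ t, ∀ y, y ∈ frontier (C t) → lam y = v → GT t :=
    fun t y hy hyv w hw => (hlamcb t w hw y hy).trans hyv
  -- the two closed pieces
  set A : Set M := (K ∩ D j) ∪ ((⋃ t, if FFLMaxChild C j t ∧ GT t then K ∩ C t else ∅) ∪
      (if GJ then closure (C j)ᶜ else ∅)) with hA
  set B : Set M := (⋃ t, if FFLMaxChild C j t ∧ ¬ GT t then K ∩ C t else ∅) ∪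
      (if GJ then ∅ else closure (C j)ᶜ) with hB
  have hAclosed : IsClosed A := by
    refine IsClosed.union (isClosed_closure.inter (ffl_D_closed hD j)) (IsClosed.union ?_ ?_)
    · exact isClosed_iUnion_of_finite fun t => by
        split_ifs
        · exact isClosed_closure.inter (hclosed t)
        · exact isClosed_empty
    · split_ifs
      · exact isClosed_closure
      · exact isClosed_empty
  have hBclosed : IsClosed B := by
    refine IsClosed.union ?_ ?_
    · exact isClosed_iUnion_of_finite fun t => by
        split_ifs
        · exact isClosed_closure.inter (hclosed t)
        · exact isClosed_empty
    · split_ifs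
      · exact isClosed_empty
      · exact isClosed_closure
  -- cover
  have hcov : K ⊆ A ∪ B := by
    intro y hy
    by_cases hyC : y ∈ C j
    · by_cases hyD : y ∈ D j
      · exact Or.inl (Or.inl ⟨hy, hyD⟩)
      · obtain ⟨t, ht, hyt⟩ := ffl_mem_maxchild hnest hD hyC hyD
        by_cases hg : GT t
        · exact Or.inl (Or.inr (Or.inl (mem_iUnion.mpr ⟨t, by
            rw [if_pos ⟨ht, hg⟩]; exact ⟨hy, hyt⟩⟩)))
        · exact Or.inr (Or.inl (mem_iUnion.mpr ⟨t, by
            rw [if_pos ⟨ht, hg⟩]; exact ⟨hy, hyt⟩⟩))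
    · have hycl : y ∈ closure (C j)ᶜ := subset_closure hyC
      by_cases hg : GJ
      · exact Or.inl (Or.inr (Or.inr (by rw [if_pos hg]; exact hycl)))
      · exact Or.inr (Or.inr (by rw [if_neg hg]; exact hycl))
  -- membership analysis
  have hAmem : ∀ y, y ∈ A → (y ∈ K ∧ y ∈ D j) ∨
      (∃ t, FFLMaxChild C j t ∧ GT t ∧ y ∈ K ∧ y ∈ C t) ∨ (GJ ∧ y ∈ closure (C j)ᶜ) := by
    intro y hy
    rcases hy with hy | hy | hy
    · exact Or.inl ⟨hy.1, hy.2⟩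
    · obtain ⟨t, hyt⟩ := mem_iUnion.mp hy
      by_cases hct : FFLMaxChild C j t ∧ GT t
      · rw [if_pos hct] at hyt
        exact Or.inr (Or.inl ⟨t, hct.1, hct.2, hyt.1, hyt.2⟩)
      · rw [if_neg hct] at hyt; exact absurd hyt (notMem_empty y)
    · by_cases hg : GJ
      · rw [if_pos hg] at hy; exact Or.inr (Or.inr ⟨hg, hy⟩)
      · rw [if_neg hg] at hy; exact absurd hy (notMem_empty y)
  have hBmem : ∀ y, y ∈ B →
      (∃ t, FFLMaxChild C j t ∧ ¬ GT t ∧ y ∈ K ∧ y ∈ C t) ∨ (¬ GJ ∧ y ∈ closure (C j)ᶜ) := by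
    intro y hy
    rcases hy with hy | hy
    · obtain ⟨t, hyt⟩ := mem_iUnion.mp hy
      by_cases hct : FFLMaxChild C j t ∧ ¬ GT t
      · rw [if_pos hct] at hyt
        exact Or.inl ⟨t, hct.1, hct.2, hyt.1, hyt.2⟩
      · rw [if_neg hct] at hyt; exact absurd hyt (notMem_empty y)
    · by_cases hg : GJ
      · rw [if_pos hg] at hy; exact absurd hy (notMem_empty y)
      · rw [if_neg hg] at hy; exact Or.inr ⟨hg, hy⟩
  -- disjointness on K
  have hAB : ∀ y, y ∈ K → y ∈ A → y ∈ B → False := by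
    intro y hyK hyA hyB
    rcases hAmem y hyA with ⟨_, hyD⟩ | ⟨t, ht, hgt, _, hyt⟩ | ⟨hgj, hycl⟩
    · -- y ∈ K ∩ D j, so lam y = v
      have hyv : lam y = v := hlamKD y hyK hyD
      rcases hBmem y hyB with ⟨t', ht', hbt', _, hyt'⟩ | ⟨hbj, hycl⟩
      · exact hbt' (hgoodT_of t' y (hfr1 t' ht' y hyD hyt') hyv)
      · exact hbj (fun w hw => (hlamcb j w hw y (hfrD y hyD hycl)).trans hyv)
    · rcases hBmem y hyB with ⟨t', ht', hbt', _, hyt'⟩ | ⟨hbj, hycl⟩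
      · by_cases hte : t = t'
        · exact hbt' (hte ▸ hgt)
        · exact (Set.eq_empty_iff_forall_notMem.mp
            (ffl_maxchild_disjoint hnest ht ht' hte) y) ⟨hyt, hyt'⟩
      · obtain ⟨hft, hfj⟩ := hfr2 t ht y hycl hyt
        have hyv : lam y = v := hgt y hft
        exact hbj (fun w hw => (hlamcb j w hw y hfj).trans hyv)
    · rcases hBmem y hyB with ⟨t', ht', hbt', _, hyt'⟩ | ⟨hbj, _⟩
      · obtain ⟨hft, hfj⟩ := hfr2 t' ht' y hycl hyt'
        have hyv : lam y = v := hgj y hfj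
        exact hbt' (hgoodT_of t' y hft hyv)
      · exact hbj hgj
  -- the D-witness is never in B
  obtain ⟨z, hzK, hzD⟩ := hKD
  have hzv : lam z = v := hlamKD z hzK hzD
  have hznB : z ∉ B := by
    intro hzB
    rcases hBmem z hzB with ⟨t', ht', hbt', _, hzt'⟩ | ⟨hbj, hzcl⟩
    · exact hbt' (hgoodT_of t' z (hfr1 t' ht' z hzD hzt') hzv)
    · exact hbj (fun w hw => (hlamcb j w hw z (hfrD z hzD hzcl)).trans hzv)
  -- no K-point lies in a "bad" clause
  have hmain : ∀ q, q ∈ K → q ∈ B → False := by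
    intro q hqK hqB
    have hqnA : q ∉ A := fun hqA => hAB q hqK hqA hqB
    exact ffl_preconnected_split hKpre hAclosed hBclosed hcov hAB
      ⟨z, hzK, hznB⟩ ⟨q, hqK, hqnA⟩
  constructor
  · intro t ht hne
    by_contra hnGT
    obtain ⟨q, hqK, hqt⟩ := hne
    refine hmain q hqK (Or.inl (mem_iUnion.mpr ⟨t, ?_⟩))
    rw [if_pos (show FFLMaxChild C j t ∧ ¬ GT t from ⟨ht, hnGT⟩)]
    exact ⟨hqK, hqt⟩
  · intro hne
    by_contra hnGJ
    obtain ⟨q, hqK, hqC⟩ := hne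
    refine hmain q hqK (Or.inr ?_)
    rw [if_neg (show ¬ GJ from hnGJ)]
    exact subset_closure hqC
end Main

section Cor
variable {C : ι → Set M} {D : ι → Set M} {lam : M → ℝ} {lamF : ι → M → ℝ}

lemma ffl_outside
    (hclosed : ∀ i, IsClosed (C i)) (hconn : ∀ i, IsConnected (C i))
    (hint : ∀ i, (interior (C i)).Nonempty)
    (hnest : ∀ i j, i < j → C j ⊂ C i ∨ C i ∩ C j = ∅)
    (hD : ∀ i, D i = closure (C i \ ⋃ j > i, C j))
    (hlamcb : ∀ k, ∀ x ∈ frontier (C k), ∀ y ∈ frontier (C k), lam x = lam y)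
    (hlamF_cont : ∀ i, Continuous (lamF i))
    (hlamF_agree : ∀ i, ∀ x ∈ D i, lamF i x = lam x)
    (hlamF_flat : ∀ i, ∀ x ∈ (D i)ᶜ, ∀ y ∈ connectedComponentIn (D i)ᶜ x,
      lamF i y = lamF i x)
    {j : ι} {p : M} (hpC : p ∉ C j) {w : M} (hw : w ∈ frontier (C j)) :
    lamF j p = lam w := by
  have hpD : p ∉ D j := fun hmem => hpC (ffl_D_subset hclosed hD j hmem)
  have hpK : p ∈ closure (connectedComponentIn (D j)ᶜ p) :=
    subset_closure (mem_connectedComponentIn hpD)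
  exact ((ffl_main hclosed hconn hint hnest hD hlamcb hlamF_cont hlamF_agree hlamF_flat
    hpD).2 ⟨p, hpK, hpC⟩ w hw).symm

lemma ffl_outside_closure
    (hclosed : ∀ i, IsClosed (C i)) (hconn : ∀ i, IsConnected (C i))
    (hint : ∀ i, (interior (C i)).Nonempty)
    (hnest : ∀ i j, i < j → C j ⊂ C i ∨ C i ∩ C j = ∅)
    (hD : ∀ i, D i = closure (C i \ ⋃ j > i, C j))
    (hlamcb : ∀ k, ∀ x ∈ frontier (C k), ∀ y ∈ frontier (C k), lam x = lam y)
    (hlamF_cont : ∀ i, Continuous (lamF i))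
    (hlamF_agree : ∀ i, ∀ x ∈ D i, lamF i x = lam x)
    (hlamF_flat : ∀ i, ∀ x ∈ (D i)ᶜ, ∀ y ∈ connectedComponentIn (D i)ᶜ x,
      lamF i y = lamF i x)
    {j : ι} {w : M} (hw : w ∈ frontier (C j)) {p : M} (hp : p ∈ closure (C j)ᶜ) :
    lamF j p = lam w := by
  have hcl : IsClosed {y | lamF j y = lam w} := isClosed_eq (hlamF_cont j) continuous_const
  have hsub : (C j)ᶜ ⊆ {y | lamF j y = lam w} := fun q hq =>
    ffl_outside hclosed hconn hint hnest hD hlamcb hlamF_cont hlamF_agree hlamF_flat hq hw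
  exact closure_minimal hsub hcl hp

lemma ffl_inside
    (hclosed : ∀ i, IsClosed (C i)) (hconn : ∀ i, IsConnected (C i))
    (hint : ∀ i, (interior (C i)).Nonempty)
    (hnest : ∀ i j, i < j → C j ⊂ C i ∨ C i ∩ C j = ∅)
    (hD : ∀ i, D i = closure (C i \ ⋃ j > i, C j))
    (hlamcb : ∀ k, ∀ x ∈ frontier (C k), ∀ y ∈ frontier (C k), lam x = lam y)
    (hlamF_cont : ∀ i, Continuous (lamF i))
    (hlamF_agree : ∀ i, ∀ x ∈ D i, lamF i x = lam x)
    (hlamF_flat : ∀ i, ∀ x ∈ (D i)ᶜ, ∀ y ∈ connectedComponentIn (D i)ᶜ x,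
      lamF i y = lamF i x)
    {j t : ι} (ht : FFLMaxChild C j t) {p : M} (hp : p ∈ C t) {w : M}
    (hw : w ∈ frontier (C t)) : lamF j p = lam w := by
  by_cases hpD : p ∈ D j
  · have hpfr : p ∈ frontier (C t) := by
      rw [frontier_eq_closure_inter_closure]
      exact ⟨subset_closure hp, ffl_D_sub_closure_compl hD ht.1 hpD⟩
    rw [hlamF_agree j p hpD]
    exact hlamcb t p hpfr w hw
  · have hpK : p ∈ closure (connectedComponentIn (D j)ᶜ p) :=
      subset_closure (mem_connectedComponentIn hpD)
    exact ((ffl_main hclosed hconn hint hnest hD hlamcb hlamF_cont hlamF_agree hlamF_flat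
      hpD).1 t ht ⟨p, hpK, hp⟩ w hw).symm

end Cor

end FFLAux

/-- Filter Factor Lemma (on the middle space).  In the lens setting with `M`
connected, let `lam : M → ℝ` be constant-boundary for the lens, let `i₀` be an
index with `C i₀ = M`, let `lamF i` be a flat extension of `lam` over `D i` for
each `i`, and let `b : ι → ℝ` be arbitrary coefficients.  For
`h p = b i₀ * lamF i₀ p + ∑_{i ≠ i₀} b i * (lamF i p - c i)`, on each support
`D i` the function `h` equals `b i * lam + k i` for some constant `k i`, with
`k i₀ = 0`. -/
theorem filter_factor_lemma {M : Type*} [MetricSpace M] [CompactSpace M] [ConnectedSpace M]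
    {ι : Type*} [Fintype ι] [LinearOrder ι]
    (C : ι → Set M)
    (hclosed : ∀ i, IsClosed (C i))
    (hconn : ∀ i, IsConnected (C i))
    (hint : ∀ i, (interior (C i)).Nonempty)
    (hnest : ∀ i j, i < j → C j ⊂ C i ∨ C i ∩ C j = ∅)
    (hcover : ⋃ i, C i = Set.univ)
    (D : ι → Set M)
    (hD : ∀ i, D i = closure (C i \ ⋃ j > i, C j))
    (lam : M → ℝ) (hlamc : Continuous lam)
    (hlamcb : ∀ k, ∀ x ∈ frontier (C k), ∀ y ∈ frontier (C k), lam x = lam y)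
    (i₀ : ι) (hroot : C i₀ = Set.univ)
    (lamF : ι → M → ℝ) (hlamF_cont : ∀ i, Continuous (lamF i))
    (hlamF_agree : ∀ i, ∀ x ∈ D i, lamF i x = lam x)
    (hlamF_flat : ∀ i, ∀ x ∈ (D i)ᶜ, ∀ y ∈ connectedComponentIn (D i)ᶜ x,
      lamF i y = lamF i x)
    (c : ι → ℝ) (hc : ∀ i, i ≠ i₀ → ∀ z ∈ frontier (C i), lam z = c i)
    (b : ι → ℝ) (h : M → ℝ)
    (hh : ∀ p : M,
      h p = b i₀ * lamF i₀ p + ∑ i ∈ Finset.univ.erase i₀, b i * (lamF i p - c i)) :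
    ∀ i : ι, ∃ k : ℝ, (∀ p ∈ D i, h p = b i * lam p + k) ∧ (i = i₀ → k = 0) := by
  have hCne : ∀ j, (C j).Nonempty := fun j => (hint j).mono interior_subset
  have hmin : ∀ j, j ≠ i₀ → i₀ < j := by
    intro j hj
    rcases lt_trichotomy j i₀ with hlt | heq | hgt
    · rcases hnest j i₀ hlt with hss | hdis
      · exact absurd (hroot ▸ hss) (fun hs => hs.2 (Set.subset_univ _))
      · exfalso
        have : C j = ∅ := by
          rw [← hdis, hroot, Set.inter_univ]
        exact (hCne j).ne_empty this
    · exact absurd heq hj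
    · exact hgt
  have hne_univ : ∀ j, j ≠ i₀ → C j ≠ Set.univ := by
    intro j hj
    rcases hnest i₀ j (hmin j hj) with hss | hdis
    · exact fun hu => (hroot ▸ hu ▸ hss).2 (Set.subset_univ _)
    · intro hu
      have : C i₀ = ∅ := by rw [← hdis, hu, Set.inter_univ]
      exact (hCne i₀).ne_empty this
  have hfrne : ∀ j, j ≠ i₀ → (frontier (C j)).Nonempty := fun j hj =>
    ffl_frontier_nonempty (hCne j) (hne_univ j hj)
  -- constants for indices above i
  have keyJgt : ∀ i j : ι, i < j → j ≠ i₀ → ∀ w ∈ frontier (C j), ∀ p ∈ D i,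
      lamF j p = lam w := by
    intro i j hij hj w hw p hp
    apply ffl_outside_closure hclosed hconn hint hnest hD hlamcb hlamF_cont
      hlamF_agree hlamF_flat hw
    have hsub : C i \ ⋃ t > i, C t ⊆ (C j)ᶜ := fun q hq hqj =>
      hq.2 (Set.mem_biUnion hij hqj)
    have hp' : p ∈ closure (C i \ ⋃ t > i, C t) := by rw [hD i] at hp; exact hp
    exact closure_mono hsub hp'
  -- constants for strict ancestors
  have keyNested : ∀ j i : ι, j < i → C i ⊂ C j → ∃ v, ∀ p ∈ D i, lamF j p = v := by
    intro j i hji hss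
    obtain ⟨s, hs, his⟩ := ffl_exists_maxchild hnest hji hss
    have hsne : C s ≠ Set.univ := by
      intro hu
      exact hs.2.1.2 (hu ▸ Set.subset_univ _)
    obtain ⟨w, hw⟩ := ffl_frontier_nonempty (hCne s) hsne
    refine ⟨lam w, fun p hp => ?_⟩
    exact ffl_inside hclosed hconn hint hnest hD hlamcb hlamF_cont hlamF_agree
      hlamF_flat hs (his (ffl_D_subset hclosed hD i hp)) hw
  -- constants for disjoint indices
  have keyDisj : ∀ j i : ι, C j ∩ C i = ∅ → j ≠ i₀ → ∃ v, ∀ p ∈ D i, lamF j p = v := by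
    intro j i hdis hj
    obtain ⟨w, hw⟩ := hfrne j hj
    refine ⟨lam w, fun p hp => ?_⟩
    apply ffl_outside_closure hclosed hconn hint hnest hD hlamcb hlamF_cont
      hlamF_agree hlamF_flat hw
    apply subset_closure
    intro hpj
    have hpi : p ∈ C i := ffl_D_subset hclosed hD i hp
    exact (Set.eq_empty_iff_forall_notMem.mp hdis p) ⟨hpj, hpi⟩
  intro i
  by_cases hii : i = i₀
  · -- the root case
    subst hii
    refine ⟨0, fun p hp => ?_, fun _ => rfl⟩
    rw [hh p, hlamF_agree i p hp]
    have hsum : ∑ j ∈ Finset.univ.erase i, b j * (lamF j p - c j) = 0 := by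
      apply Finset.sum_eq_zero
      intro j hj
      have hji : j ≠ i := (Finset.mem_erase.mp hj).1
      obtain ⟨w, hw⟩ := hfrne j hji
      have h1 : lamF j p = lam w := keyJgt i j (hmin j hji) hji w hw p hp
      have h2 : lam w = c j := hc j hji w hw
      rw [h1, h2, sub_self, mul_zero]
    rw [hsum]
  · -- non-root case
    have hi0i : i₀ < i := hmin i hii
    have hVt : ∀ j : ι, ∃ v : ℝ, j ≠ i → ∀ p ∈ D i, lamF j p = v := by
      intro j
      by_cases hji : j = i
      · exact ⟨0, fun hcon => absurd hji hcon⟩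
      by_cases hj0 : j = i₀
      · subst hj0
        have hss : C i ⊂ C j := by
          rw [hroot]
          exact ⟨Set.subset_univ _, fun hs => hne_univ i hii
            (Set.eq_univ_of_univ_subset hs)⟩
        obtain ⟨v, hv⟩ := keyNested j i (hmin i hii) hss
        exact ⟨v, fun _ => hv⟩
      · rcases lt_trichotomy j i with hlt | heq | hgt
        · rcases hnest j i hlt with hss | hdis
          · obtain ⟨v, hv⟩ := keyNested j i hlt hss
            exact ⟨v, fun _ => hv⟩
          · obtain ⟨v, hv⟩ := keyDisj j i hdis hj0
            exact ⟨v, fun _ => hv⟩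
        · exact absurd heq hji
        · obtain ⟨w, hw⟩ := hfrne j hj0
          exact ⟨lam w, fun _ => keyJgt i j hgt hj0 w hw⟩
    set V : ι → ℝ := fun j => (hVt j).choose with hV
    have hVspec : ∀ j, j ≠ i → ∀ p ∈ D i, lamF j p = V j := fun j hj =>
      (hVt j).choose_spec hj
    refine ⟨b i₀ * V i₀ - b i * c i +
      ∑ j ∈ (Finset.univ.erase i₀).erase i, b j * (V j - c j),
      fun p hp => ?_, fun hcon => absurd hcon hii⟩
    have hi_mem : i ∈ Finset.univ.erase i₀ := Finset.mem_erase.mpr ⟨hii, Finset.mem_univ i⟩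
    rw [hh p, ← Finset.add_sum_erase _ _ hi_mem]
    have hsum : ∑ j ∈ (Finset.univ.erase i₀).erase i, b j * (lamF j p - c j) =
        ∑ j ∈ (Finset.univ.erase i₀).erase i, b j * (V j - c j) := by
      apply Finset.sum_congr rfl
      intro j hj
      rw [hVspec j (Finset.mem_erase.mp hj).1 p hp]
    rw [hsum, hlamF_agree i p hp, hVspec i₀ (Ne.symm hii) p hp]
    ring
end

section
/- Let M be a connected compact metric space, let D ⊆ M be a nonempty closed subset, and let g : M → ℝ be a continuous function that is constant on every connected component of M \ D. Then the image of g equals the image of its restriction to D, i.e. g(M) = g(D). -/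
open Set

/-- Boundary bumping lemma: in a compact Hausdorff preconnected space, the connected
component of a point in a proper closed set meets the frontier of that set. -/
theorem bumping_aux {X : Type*} [TopologicalSpace X] [T2Space X] [CompactSpace X]
    [PreconnectedSpace X] {A : Set X} (hA : IsClosed A) (hAne : A ≠ Set.univ)
    {x : X} (hx : x ∈ A) :
    (connectedComponentIn A x ∩ frontier A).Nonempty := by
  by_contra hcon
  rw [Set.not_nonempty_iff_eq_empty, ← Set.disjoint_iff_inter_eq_empty] at hcon
  have hCint : connectedComponentIn A x ⊆ interior A := by
    intro y hy
    have hyA : y ∈ A := connectedComponentIn_subset A x hy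
    by_contra hyint
    exact Set.disjoint_left.mp hcon hy ⟨subset_closure hyA, hyint⟩
  haveI : CompactSpace A := isCompact_iff_compactSpace.mp hA.isCompact
  set x' : A := ⟨x, hx⟩ with hx'
  have himg : connectedComponentIn A x = (↑) '' connectedComponent x' :=
    connectedComponentIn_eq_image hx
  have hiInter := connectedComponent_eq_iInter_isClopen x'
  set T : Set A := (↑) ⁻¹' (interior A)ᶜ with hT
  have hTclosed : IsClosed T := (isOpen_interior.preimage continuous_subtype_val).isClosed_compl
  have hempty : T ∩ ⋂ s : {s : Set A // IsClopen s ∧ x' ∈ s}, (s : Set A) = ∅ := by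
    rw [← hiInter]
    ext y
    simp only [Set.mem_inter_iff, Set.mem_empty_iff_false, iff_false, not_and]
    intro hy1 hy2
    exact hy1 (hCint (himg ▸ Set.mem_image_of_mem _ hy2))
  have hfin : ¬ ∀ u : Finset {s : Set A // IsClopen s ∧ x' ∈ s},
      (T ∩ ⋂ i ∈ u, (i : Set A)).Nonempty := by
    intro hall
    have := hTclosed.isCompact.inter_iInter_nonempty
      (fun s : {s : Set A // IsClopen s ∧ x' ∈ s} => (s : Set A)) (fun s => s.2.1.1) hall
    rw [hempty] at this
    exact this.ne_empty rfl
  push_neg at hfin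
  obtain ⟨u, hu⟩ := hfin
  set K : Set A := ⋂ i ∈ u, (i : Set A) with hK
  have hKclopen : IsClopen K := isClopen_biInter_finset fun s _ => s.2.1
  have hxK : x' ∈ K := Set.mem_iInter₂.mpr fun s _ => s.2.2
  have hKsub : K ⊆ (↑) ⁻¹' interior A := by
    intro y hy
    by_contra hyc
    exact (Set.eq_empty_iff_forall_notMem.mp hu y) ⟨hyc, hy⟩
  set K' : Set X := (↑) '' K with hK'
  have hK'closed : IsClosed K' :=
    (hKclopen.1.isCompact.image continuous_subtype_val).isClosed
  obtain ⟨W, hWopen, hWK⟩ := isOpen_induced_iff.mp hKclopen.2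
  have hK'eq : K' = interior A ∩ W := by
    apply Set.Subset.antisymm
    · rintro _ ⟨z, hz, rfl⟩
      exact ⟨hKsub hz, by have := hWK ▸ hz; exact this⟩
    · rintro y ⟨hy1, hy2⟩
      exact ⟨⟨y, interior_subset hy1⟩, by rw [← hWK] at *; exact hy2, rfl⟩
  have hK'open : IsOpen K' := hK'eq ▸ isOpen_interior.inter hWopen
  have hK'ne : K'.Nonempty := ⟨x, Set.mem_image_of_mem _ hxK⟩
  rcases isClopen_iff.mp ⟨hK'closed, hK'open⟩ with h1 | h1
  · exact hK'ne.ne_empty h1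
  · have : K' ⊆ A := by rintro _ ⟨z, _, rfl⟩; exact z.2
    exact hAne (Set.Subset.antisymm (Set.subset_univ A) (h1 ▸ this))

/-- A continuous function on a connected compact metric space that is constant
on every connected component of the complement of a nonempty closed set `D`
attains all of its values on `D`: `g(M) = g(D)`. -/
theorem flat_extension_image {M : Type*} [MetricSpace M] [CompactSpace M] [ConnectedSpace M]
    (D : Set M) (hDne : D.Nonempty) (hDclosed : IsClosed D)
    (g : M → ℝ) (hg : Continuous g)
    (hconst : ∀ x ∈ Dᶜ, ∀ y ∈ connectedComponentIn Dᶜ x, g y = g x) :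
    g '' Set.univ = g '' D := by
  apply Set.Subset.antisymm
  · rintro _ ⟨x, -, rfl⟩
    by_cases hx : x ∈ D
    · exact ⟨x, hx, rfl⟩
    · set C := connectedComponentIn Dᶜ x with hC
      have hxC : x ∈ C := mem_connectedComponentIn hx
      -- closure C meets D
      have hmeet : (closure C ∩ D).Nonempty := by
        by_contra hcon
        rw [Set.not_nonempty_iff_eq_empty, ← Set.disjoint_iff_inter_eq_empty] at hcon
        have hclsub : closure C ⊆ Dᶜ := fun y hy hyD => Set.disjoint_left.mp hcon hy hyD
        have hclC : closure C ⊆ C :=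
          isPreconnected_connectedComponentIn.closure.subset_connectedComponentIn
            (subset_closure hxC) hclsub
        have hCclosed : IsClosed C := isClosed_of_closure_subset hclC
        -- separate C from D
        obtain ⟨V, hVopen, hCV, hVD⟩ :=
          normal_exists_closure_subset hCclosed hDclosed.isOpen_compl
            ((connectedComponentIn_subset Dᶜ x))
        have hAclosed : IsClosed (closure V) := isClosed_closure
        have hAne : closure V ≠ Set.univ := by
          intro h
          obtain ⟨d, hd⟩ := hDne
          exact hVD (h ▸ Set.mem_univ d) hd
        have hxA : x ∈ closure V := subset_closure (hCV hxC)
        obtain ⟨z, hz1, hz2⟩ := bumping_aux hAclosed hAne hxA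
        -- z is in C (hence in V) but in the frontier of closure V (hence outside V)
        have hzC : z ∈ C := by
          refine isPreconnected_connectedComponentIn.subset_connectedComponentIn
            (mem_connectedComponentIn hxA) (fun w hw => hVD (connectedComponentIn_subset _ _ hw))
            hz1
        have hzV : z ∈ V := hCV hzC
        exact hz2.2 (hVopen.subset_interior_iff.mpr subset_closure hzV)
      obtain ⟨z, hzcl, hzD⟩ := hmeet
      refine ⟨z, hzD, ?_⟩
      have hsub : C ⊆ g ⁻¹' {g x} := fun y hy => hconst x hx y hy
      have : closure C ⊆ g ⁻¹' {g x} :=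
        closure_minimal hsub (IsClosed.preimage hg isClosed_singleton)
      exact this hzcl
  · exact Set.image_mono (f := g) (Set.subset_univ D)
end

section
/- Let M be a nonempty connected compact metric space, ι a finite linearly ordered index type, and C : ι → Set M a family of closed subsets such that ⋃ i, C i = M and the family is nested, meaning that for all indices i < j either C j is a strict subset of C i or C i ∩ C j = ∅. Then there is exactly one index i₀ with C i₀ = M. -/
/-- A finite nested family of closed sets covering a nonempty connected compact
metric space contains the whole space as its unique member equal to `M`
(the unique root region of a varilet lens). -/
theorem unique_root_region {M : Type*} [MetricSpace M] [CompactSpace M]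
    [ConnectedSpace M] [Nonempty M]
    {ι : Type*} [Fintype ι] [LinearOrder ι]
    (C : ι → Set M)
    (hclosed : ∀ i, IsClosed (C i))
    (hnest : ∀ i j, i < j → C j ⊂ C i ∨ C i ∩ C j = ∅)
    (hcover : ⋃ i, C i = Set.univ) :
    ∃! i₀ : ι, C i₀ = Set.univ := by
  obtain ⟨x⟩ := ‹Nonempty M›
  classical
  have hx : ∃ i, x ∈ C i := by
    have : x ∈ ⋃ i, C i := by rw [hcover]; trivial
    simpa using this
  set s : Finset ι := Finset.univ.filter (fun i => x ∈ C i) with hs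
  have hsne : s.Nonempty := by
    obtain ⟨i, hi⟩ := hx
    exact ⟨i, by simp [hs, hi]⟩
  set i₀ := s.min' hsne with hi₀
  have hxi₀ : x ∈ C i₀ := by
    have := s.min'_mem hsne
    simpa [hs] using this
  -- key dichotomy
  have key : ∀ j, C j ⊆ C i₀ ∨ C j ∩ C i₀ = ∅ := by
    intro j
    rcases lt_trichotomy j i₀ with h | h | h
    · rcases hnest j i₀ h with hsub | hdisj
      · exfalso
        have hxj : x ∈ C j := hsub.1 hxi₀
        have hj : j ∈ s := by simp [hs, hxj]
        exact absurd (s.min'_le j hj) (not_le.2 h)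
      · right; exact hdisj
    · left; rw [h]
    · rcases hnest i₀ j h with hsub | hdisj
      · left; exact hsub.1
      · right; rw [Set.inter_comm]; exact hdisj
  -- complement of C i₀ is the union of disjoint members, hence closed
  have hcomplT : (C i₀)ᶜ = ⋃ j ∈ Finset.univ.filter (fun j => C j ∩ C i₀ = ∅), C j := by
    ext y
    simp only [Set.mem_compl_iff, Set.mem_iUnion, Finset.mem_filter, Finset.mem_univ,
      true_and]
    constructor
    · intro hy
      have : y ∈ ⋃ i, C i := by rw [hcover]; trivial
      obtain ⟨j, hj⟩ := Set.mem_iUnion.1 this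
      rcases key j with hsub | hdisj
      · exact absurd (hsub hj) hy
      · exact ⟨j, hdisj, hj⟩
    · rintro ⟨j, hdisj, hj⟩ hy
      have : y ∈ C j ∩ C i₀ := ⟨hj, hy⟩
      rw [hdisj] at this
      exact this
  have hclosed_compl : IsClosed (C i₀)ᶜ := by
    rw [hcomplT]
    exact Set.Finite.isClosed_biUnion (Finset.finite_toSet _) (fun j _ => hclosed j)
  have hopen : IsOpen (C i₀) := isClosed_compl_iff.1 hclosed_compl
  have huniv : C i₀ = Set.univ :=
    IsClopen.eq_univ ⟨hclosed i₀, hopen⟩ ⟨x, hxi₀⟩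
  refine ⟨i₀, huniv, ?_⟩
  intro j hj
  by_contra hne
  rcases lt_or_gt_of_ne hne with h | h
  · rcases hnest j i₀ h with hsub | hdisj
    · rw [huniv, hj] at hsub; exact hsub.2 (subset_refl _)
    · rw [huniv, hj, Set.inter_self] at hdisj
      exact (Set.univ_nonempty).ne_empty hdisj
  · rcases hnest i₀ j h with hsub | hdisj
    · rw [huniv, hj] at hsub; exact hsub.2 (subset_refl _)
    · rw [huniv, hj, Set.inter_self] at hdisj
      exact (Set.univ_nonempty).ne_empty hdisj
end
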